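/- arXiv:2504.10223 — 6 statements merged into one kernel-verified Lean document; each statement's English description precedes it below -/
import Mathlib

section
/- Let p₀, ..., pₙ be complex numbers, not all zero, and define hₖ := Σ_{j=0}^{n-k} p_{j+k} · conj(p_j) for k = 0, ..., n. Then the polynomial H(z) := h₀ + 2·Σ_{k=1}^n hₖ zᵏ satisfies Re H(e^{iφ}) = |Σ_{k=0}^n pₖ e^{ikφ}|² ≥ 0 for all real φ. -/
open Complex Finset

theorem stmt_2 (n : ℕ) (p : ℕ → ℂ) (hp : ∃ k ≤ n, p k ≠ 0)
    (h : ℕ → ℂ)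
    (hh : ∀ k, h k = ∑ j ∈ Finset.range (n - k + 1), p (j + k) * (starRingEnd ℂ) (p j))
    (H : ℂ → ℂ)
    (hH : ∀ z : ℂ, H z = h 0 + 2 * ∑ k ∈ Finset.Icc 1 n, h k * z ^ k) :
    ∀ φ : ℝ,
      (H (Complex.exp (Complex.I * φ))).re
          = ‖∑ k ∈ Finset.range (n + 1), p k * Complex.exp (Complex.I * k * φ)‖ ^ 2 ∧
      0 ≤ (H (Complex.exp (Complex.I * φ))).re := by
  intro φ
  set z := Complex.exp (Complex.I * φ) with hzdef
  have hz : z * (starRingEnd ℂ) z = 1 := by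
    rw [hzdef, ← Complex.exp_conj, ← Complex.exp_add]
    rw [show (starRingEnd ℂ) (Complex.I * (φ : ℂ)) = -(Complex.I * φ) by
      simp [map_mul, Complex.conj_I, Complex.conj_ofReal]]
    simp
  have hek : ∀ k : ℕ, Complex.exp (Complex.I * k * φ) = z ^ k := by
    intro k
    rw [hzdef, ← Complex.exp_nat_mul]
    ring_nf
  set S := ∑ k ∈ Finset.range (n + 1), p k * z ^ k with hS
  have hSeq : ∑ k ∈ Finset.range (n + 1), p k * Complex.exp (Complex.I * k * φ) = S := by
    refine Finset.sum_congr rfl fun k _ => ?_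
    rw [hek]
  set D := ∑ j ∈ Finset.range (n + 1), p j * (starRingEnd ℂ) (p j) with hD
  set O := ∑ k ∈ Finset.Icc 1 n, ∑ j ∈ Finset.range (n - k + 1),
      p (j + k) * (starRingEnd ℂ) (p j) * z ^ k with hO
  have hHz : H z = D + 2 * O := by
    rw [hH, hO, hD, hh 0]
    simp only [Nat.sub_zero, Nat.add_zero, pow_zero]
    congr 1
    refine congrArg (2 * ·) ?_
    refine Finset.sum_congr rfl fun k _ => ?_
    rw [hh k, Finset.sum_mul]
  -- key identity
  have key : S * (starRingEnd ℂ) S = D + O + (starRingEnd ℂ) O := by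
    have hconjS : (starRingEnd ℂ) S =
        ∑ b ∈ Finset.range (n + 1), (starRingEnd ℂ) (p b) * ((starRingEnd ℂ) z) ^ b := by
      rw [hS, map_sum]
      refine Finset.sum_congr rfl fun b _ => ?_
      rw [map_mul, map_pow]
    rw [hconjS, hS, Finset.sum_mul_sum]
    have hsplit : ∀ a ∈ Finset.range (n + 1),
        ∑ b ∈ Finset.range (n + 1),
            p a * z ^ a * ((starRingEnd ℂ) (p b) * ((starRingEnd ℂ) z) ^ b)
          = (∑ b ∈ Finset.range a,
              p a * z ^ a * ((starRingEnd ℂ) (p b) * ((starRingEnd ℂ) z) ^ b))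
            + p a * z ^ a * ((starRingEnd ℂ) (p a) * ((starRingEnd ℂ) z) ^ a)
            + ∑ b ∈ Finset.Ico (a + 1) (n + 1),
              p a * z ^ a * ((starRingEnd ℂ) (p b) * ((starRingEnd ℂ) z) ^ b) := by
      intro a ha
      rw [Finset.mem_range] at ha
      rw [show Finset.range (n + 1) = Finset.Ico 0 (n + 1) by rw [Finset.range_eq_Ico],
        ← Finset.sum_Ico_consecutive _ (Nat.zero_le (a + 1)) (by omega : a + 1 ≤ n + 1),
        ← Finset.range_eq_Ico, Finset.sum_range_succ]
    rw [Finset.sum_congr rfl hsplit]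
    rw [Finset.sum_add_distrib, Finset.sum_add_distrib]
    have hdiag : ∀ a ∈ Finset.range (n + 1),
        p a * z ^ a * ((starRingEnd ℂ) (p a) * ((starRingEnd ℂ) z) ^ a)
          = p a * (starRingEnd ℂ) (p a) := by
      intro a _
      have : z ^ a * ((starRingEnd ℂ) z) ^ a = 1 := by
        rw [← mul_pow, hz, one_pow]
      calc p a * z ^ a * ((starRingEnd ℂ) (p a) * ((starRingEnd ℂ) z) ^ a)
          = p a * (starRingEnd ℂ) (p a) * (z ^ a * ((starRingEnd ℂ) z) ^ a) := by ring
        _ = p a * (starRingEnd ℂ) (p a) := by rw [this, mul_one]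
    have hL : (∑ a ∈ Finset.range (n + 1), ∑ b ∈ Finset.range a,
        p a * z ^ a * ((starRingEnd ℂ) (p b) * ((starRingEnd ℂ) z) ^ b)) = O := by
      rw [hO, Finset.sum_sigma', Finset.sum_sigma']
      refine Finset.sum_bij' (fun x _ => ⟨x.1 - x.2, x.2⟩) (fun y _ => ⟨y.2 + y.1, y.2⟩)
        ?_ ?_ ?_ ?_ ?_
      · rintro ⟨a, b⟩ hab
        simp only [Finset.mem_sigma, Finset.mem_range, Finset.mem_Icc] at hab ⊢
        omega
      · rintro ⟨k, j⟩ hkj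
        simp only [Finset.mem_sigma, Finset.mem_range, Finset.mem_Icc] at hkj ⊢
        omega
      · rintro ⟨a, b⟩ hab
        simp only [Finset.mem_sigma, Finset.mem_range] at hab
        simp only [Sigma.mk.inj_iff, heq_eq_eq]
        refine ⟨?_, ?_⟩ <;> first | trivial | omega
      · rintro ⟨k, j⟩ hkj
        simp only [Finset.mem_sigma, Finset.mem_range, Finset.mem_Icc] at hkj
        simp only [Sigma.mk.inj_iff, heq_eq_eq]
        refine ⟨?_, ?_⟩ <;> first | trivial | omega
      · rintro ⟨a, b⟩ hab
        simp only [Finset.mem_sigma, Finset.mem_range] at hab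
        obtain ⟨ha, hb⟩ := hab
        have h1 : b + (a - b) = a := by omega
        have h2 : z ^ a = z ^ (a - b) * z ^ b := by
          rw [← pow_add]; congr 1; omega
        rw [h1, h2]
        have : z ^ b * ((starRingEnd ℂ) z) ^ b = 1 := by
          rw [← mul_pow, hz, one_pow]
        calc p a * (z ^ (a - b) * z ^ b) * ((starRingEnd ℂ) (p b) * ((starRingEnd ℂ) z) ^ b)
            = p a * (starRingEnd ℂ) (p b) * z ^ (a - b) * (z ^ b * ((starRingEnd ℂ) z) ^ b) := by
              ring
          _ = p a * (starRingEnd ℂ) (p b) * z ^ (a - b) := by rw [this, mul_one]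
    have hU : (∑ a ∈ Finset.range (n + 1), ∑ b ∈ Finset.Ico (a + 1) (n + 1),
        p a * z ^ a * ((starRingEnd ℂ) (p b) * ((starRingEnd ℂ) z) ^ b)) = (starRingEnd ℂ) O := by
      rw [hO, map_sum]
      have : ∀ k, (starRingEnd ℂ) (∑ j ∈ Finset.range (n - k + 1),
          p (j + k) * (starRingEnd ℂ) (p j) * z ^ k)
          = ∑ j ∈ Finset.range (n - k + 1),
            (starRingEnd ℂ) (p (j + k)) * p j * ((starRingEnd ℂ) z) ^ k := by
        intro k
        rw [map_sum]
        refine Finset.sum_congr rfl fun j _ => ?_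
        rw [map_mul, map_mul, map_pow, Complex.conj_conj]
      rw [Finset.sum_congr rfl fun k _ => this k]
      rw [Finset.sum_sigma', Finset.sum_sigma']
      refine Finset.sum_bij' (fun x _ => ⟨x.2 - x.1, x.1⟩) (fun y _ => ⟨y.2, y.2 + y.1⟩)
        ?_ ?_ ?_ ?_ ?_
      · rintro ⟨a, b⟩ hab
        simp only [Finset.mem_sigma, Finset.mem_range, Finset.mem_Ico, Finset.mem_Icc] at hab ⊢
        omega
      · rintro ⟨k, j⟩ hkj
        simp only [Finset.mem_sigma, Finset.mem_range, Finset.mem_Ico, Finset.mem_Icc] at hkj ⊢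
        omega
      · rintro ⟨a, b⟩ hab
        simp only [Finset.mem_sigma, Finset.mem_range, Finset.mem_Ico] at hab
        simp only [Sigma.mk.inj_iff, heq_eq_eq]
        refine ⟨?_, ?_⟩ <;> first | trivial | omega
      · rintro ⟨k, j⟩ hkj
        simp only [Finset.mem_sigma, Finset.mem_range, Finset.mem_Icc] at hkj
        simp only [Sigma.mk.inj_iff, heq_eq_eq]
        refine ⟨?_, ?_⟩ <;> first | trivial | omega
      · rintro ⟨a, b⟩ hab
        simp only [Finset.mem_sigma, Finset.mem_range, Finset.mem_Ico] at hab
        obtain ⟨ha, hb1, hb2⟩ := hab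
        have h1 : a + (b - a) = b := by omega
        have h2 : ((starRingEnd ℂ) z) ^ b = ((starRingEnd ℂ) z) ^ (b - a) *
            ((starRingEnd ℂ) z) ^ a := by
          rw [← pow_add]; congr 1; omega
        rw [h1, h2]
        have : z ^ a * ((starRingEnd ℂ) z) ^ a = 1 := by
          rw [← mul_pow, hz, one_pow]
        calc p a * z ^ a * ((starRingEnd ℂ) (p b) *
              (((starRingEnd ℂ) z) ^ (b - a) * ((starRingEnd ℂ) z) ^ a))
            = (starRingEnd ℂ) (p b) * p a * ((starRingEnd ℂ) z) ^ (b - a) *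
              (z ^ a * ((starRingEnd ℂ) z) ^ a) := by ring
          _ = (starRingEnd ℂ) (p b) * p a * ((starRingEnd ℂ) z) ^ (b - a) := by
              rw [this, mul_one]
    rw [hL, hU, Finset.sum_congr rfl hdiag, ← hD]
    ring
  have hnorm : ‖S‖ ^ 2 = (S * (starRingEnd ℂ) S).re := by
    rw [Complex.mul_conj, Complex.ofReal_re, Complex.normSq_eq_norm_sq]
  have hre : (H z).re = ‖S‖ ^ 2 := by
    rw [hnorm, key, hHz]
    simp only [Complex.add_re, Complex.mul_re, Complex.conj_re]
    norm_num
    ring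
  refine ⟨by rw [hSeq] at *; exact hre, ?_⟩
  rw [hre]
  positivity
end

section
/- Let p₀, ..., pₙ be complex numbers, not all zero, and define hₖ := Σ_{j=0}^{n-k} p_{j+k} · conj(p_j) for k = 0, ..., n. Then the polynomial H(z) := h₀ + 2·Σ_{k=1}^n hₖ zᵏ has Re H(z) > 0 for all z in the open unit disk, provided H(0) = h₀ > 0. -/
open Complex Finset Metric

theorem stmt_3 (n : ℕ) (p : ℕ → ℂ) (hp : ∃ k ≤ n, p k ≠ 0)
    (h : ℕ → ℂ)
    (hh : ∀ k, h k = ∑ j ∈ Finset.range (n - k + 1), p (j + k) * (starRingEnd ℂ) (p j))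
    (H : ℂ → ℂ)
    (hH : ∀ z : ℂ, H z = h 0 + 2 * ∑ k ∈ Finset.Icc 1 n, h k * z ^ k)
    (hpos : 0 < (H 0).re) :
    ∀ z ∈ ball (0 : ℂ) 1, 0 < (H z).re := by
  intro z hz
  rw [mem_ball, dist_zero_right] at hz
  set q : ℕ → ℂ := fun j => ∑ m ∈ Finset.range (n + 1 - j), p (m + j) * z ^ m with hq
  -- recurrence
  have hqrec : ∀ j ≤ n, q j = p j + z * q (j + 1) := by
    intro j hj
    have h1 : n + 1 - j = (n - j) + 1 := by omega
    have h2 : n + 1 - (j + 1) = n - j := by omega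
    simp only [hq, h1, h2, Finset.sum_range_succ']
    rw [Finset.mul_sum, add_comm]
    congr 1
    · simp
    · refine Finset.sum_congr rfl fun m _ => ?_
      rw [show m + 1 + j = m + (j + 1) by omega]
      ring
  have hqtop : q (n + 1) = 0 := by
    simp [hq]
  -- key double sum swap
  have key : ∑ k ∈ Finset.Icc 1 n, h k * z ^ k
      = ∑ j ∈ Finset.range (n + 1), (z * q (j + 1)) * (starRingEnd ℂ) (p j) := by
    rw [show Finset.Icc 1 n = Finset.Ico 1 (n + 1) by rw [Finset.Ico_add_one_right_eq_Icc],
      Finset.sum_Ico_eq_sum_range]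
    simp only [hh, hq, Finset.sum_mul, Finset.mul_sum]
    rw [show n + 1 - 1 = n by omega]
    simp only [show ∀ j : ℕ, n + 1 - (j + 1) = n - j from fun j => by omega]
    rw [Finset.sum_comm' (t' := Finset.range (n + 1))
      (s' := fun j => Finset.range (n - j))]
    · refine Finset.sum_congr rfl fun j hj => Finset.sum_congr rfl fun m hm => ?_
      rw [show j + (1 + m) = m + (j + 1) by omega]
      ring
    · intro x y
      simp only [Finset.mem_range]
      omega
  -- the main real identity
  have hre : (H z).re = (1 - normSq z) * (∑ j ∈ Finset.range (n + 1), normSq (q j))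
      + normSq z * normSq (q 0) := by
    have h0re : (h 0).re = ∑ j ∈ Finset.range (n + 1), normSq (p j) := by
      rw [hh]
      rw [Complex.re_sum]
      refine Finset.sum_congr rfl fun j _ => ?_
      simp [Complex.mul_conj]
    have hterm : ∀ j ∈ Finset.range (n + 1),
        2 * ((z * q (j + 1)) * (starRingEnd ℂ) (p j)).re
          = normSq (q j) - normSq (p j) - normSq z * normSq (q (j + 1)) := by
      intro j hj
      rw [Finset.mem_range] at hj
      have := hqrec j (by omega)
      rw [this, Complex.normSq_add, Complex.normSq_mul]
      simp only [Complex.normSq_apply, Complex.mul_re, Complex.mul_im,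
        Complex.conj_re, Complex.conj_im]
      ring
    rw [hH, key]
    rw [Complex.add_re, h0re]
    have h2re : (2 * ∑ j ∈ Finset.range (n + 1), (z * q (j + 1)) * (starRingEnd ℂ) (p j)).re
        = ∑ j ∈ Finset.range (n + 1), 2 * ((z * q (j + 1)) * (starRingEnd ℂ) (p j)).re := by
      rw [show ((2 : ℂ) * ∑ j ∈ Finset.range (n + 1), (z * q (j + 1)) * (starRingEnd ℂ) (p j)).re
        = 2 * (∑ j ∈ Finset.range (n + 1), (z * q (j + 1)) * (starRingEnd ℂ) (p j)).re by
          simp [Complex.mul_re]]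
      rw [Complex.re_sum, Finset.mul_sum]
    rw [h2re, Finset.sum_congr rfl hterm]
    rw [Finset.sum_sub_distrib, Finset.sum_sub_distrib, ← Finset.mul_sum]
    have hshift : ∑ j ∈ Finset.range (n + 1), normSq (q (j + 1))
        = (∑ j ∈ Finset.range (n + 1), normSq (q j)) - normSq (q 0) := by
      have e1 : ∑ j ∈ Finset.range (n + 2), normSq (q j)
          = (∑ j ∈ Finset.range (n + 1), normSq (q (j + 1))) + normSq (q 0) :=
        Finset.sum_range_succ' (fun j => normSq (q j)) (n + 1)
      have e2 : ∑ j ∈ Finset.range (n + 2), normSq (q j)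
          = (∑ j ∈ Finset.range (n + 1), normSq (q j)) + normSq (q (n + 1)) :=
        Finset.sum_range_succ (fun j => normSq (q j)) (n + 1)
      rw [hqtop] at e2
      simp only [Complex.normSq_zero, add_zero] at e2
      linarith
    rw [hshift]
    ring
  -- positivity
  obtain ⟨k, hkn, hkne⟩ := hp
  set S := (Finset.range (n + 1)).filter (fun k => p k ≠ 0) with hS
  have hSne : S.Nonempty := ⟨k, by simp [hS, Finset.mem_range]; exact ⟨by omega, hkne⟩⟩
  set K := S.max' hSne with hK
  have hKS : K ∈ S := Finset.max'_mem S hSne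
  have hKn : K ≤ n := by
    have := (Finset.mem_filter.mp hKS).1
    rw [Finset.mem_range] at this; omega
  have hKne : p K ≠ 0 := (Finset.mem_filter.mp hKS).2
  have hKmax : ∀ m, K < m → m ≤ n → p m = 0 := by
    intro m hm1 hm2
    by_contra hcon
    have : m ∈ S := Finset.mem_filter.mpr ⟨Finset.mem_range.mpr (by omega), hcon⟩
    exact absurd (Finset.le_max' S m this) (by omega)
  have hqK : q K = p K := by
    have h1 : n + 1 - K = (n - K) + 1 := by omega
    simp only [hq, h1, Finset.sum_range_succ']
    have : ∀ m ∈ Finset.range (n - K), p (m + 1 + K) * z ^ (m + 1) = 0 := by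
      intro m hm
      rw [Finset.mem_range] at hm
      rw [hKmax (m + 1 + K) (by omega) (by omega)]
      ring
    rw [Finset.sum_congr rfl this]
    simp
  have hnz : normSq z < 1 := by
    have : normSq z = ‖z‖ ^ 2 := by
      rw [Complex.normSq_eq_norm_sq]
    nlinarith [norm_nonneg z, hz]
  have hqKpos : 0 < normSq (q K) := by
    rw [hqK]; exact Complex.normSq_pos.mpr hKne
  have hsum : normSq (q K) ≤ ∑ j ∈ Finset.range (n + 1), normSq (q j) := by
    apply Finset.single_le_sum (fun j _ => Complex.normSq_nonneg (q j))
    exact Finset.mem_range.mpr (by omega)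
  rw [hre]
  have h1 : 0 < (1 - normSq z) * (∑ j ∈ Finset.range (n + 1), normSq (q j)) := by
    apply mul_pos (by linarith)
    linarith
  nlinarith [Complex.normSq_nonneg z, Complex.normSq_nonneg (q 0)]
end

section
/- Let H(z) = h₀ + 2·Σ_{k=1}^n hₖ zᵏ with h₀ > 0, hₙ > 0, Re H ≥ 0 on the closed unit disk, and suppose all n roots of H lie on the unit circle. Then H(z) = h₀(1 + zⁿ). -/
open Complex Finset

theorem stmt_6 (n : ℕ) (hn : 1 ≤ n) (h₀ : ℝ) (h : ℕ → ℂ)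
    (H : ℂ → ℂ)
    (hH : ∀ z : ℂ, H z = (h₀ : ℂ) + 2 * ∑ k ∈ Finset.Icc 1 n, h k * z ^ k)
    (hpos : 0 < h₀) (hnim : (h n).im = 0) (hnpos : 0 < (h n).re)
    (hre : ∀ z : ℂ, ‖z‖ ≤ 1 → 0 ≤ (H z).re)
    (r : Fin n → ℂ) (hr : ∀ k, ‖r k‖ = 1)
    (hfact : ∀ w : ℂ, H w = 2 * h n * ∏ k, (w - r k)) :
    ∀ z : ℂ, H z = (h₀ : ℂ) * (1 + z ^ n) := by
  have hπ := Real.pi_pos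
  have hn0R : (0 : ℝ) < n := by exact_mod_cast hn
  -- Part 1 : h n = h₀ / 2 and ∏ (0 - r k) = 1
  have hH0 : H 0 = (h₀ : ℂ) := by
    rw [hH 0, Finset.sum_eq_zero, mul_zero, add_zero]
    intro k hk
    rw [Finset.mem_Icc] at hk
    rw [zero_pow (by omega), mul_zero]
  have hprod : (h₀ : ℂ) = 2 * h n * ∏ k, (0 - r k) := by rw [← hH0, hfact]
  have hhn : h n = ((h n).re : ℂ) := by
    apply Complex.ext <;> simp [hnim]
  have hnorm : h₀ = 2 * (h n).re := by
    have h1 := congrArg norm hprod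
    rw [norm_mul, norm_mul, norm_prod] at h1
    have h2 : ∀ k : Fin n, ‖(0 : ℂ) - r k‖ = 1 := by
      intro k; rw [zero_sub, norm_neg, hr]
    rw [Finset.prod_eq_one (fun k _ => h2 k)] at h1
    rw [hhn] at h1
    simp only [Complex.norm_real, Real.norm_eq_abs, abs_of_pos hpos, abs_of_pos hnpos,
      Complex.norm_ofNat, mul_one] at h1
    linarith
  have hhalf : h n = ((h₀ / 2 : ℝ) : ℂ) := by
    rw [hhn, hnorm]; push_cast; ring
  have hprod1 : ∏ k, ((0 : ℂ) - r k) = 1 := by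
    have hne : (h₀ : ℂ) ≠ 0 := by exact_mod_cast hpos.ne'
    have h3 : (2 : ℂ) * ((h₀ / 2 : ℝ) : ℂ) = (h₀ : ℂ) := by push_cast; ring
    rw [hhalf, h3] at hprod
    exact mul_left_cancel₀ hne (by rw [← hprod, mul_one])
  -- Part 2 : self-inversive identity on the unit circle
  have hsi : ∀ z : ℂ, ‖z‖ = 1 → z ^ n * (starRingEnd ℂ) (H z) = H z := by
    intro z hz
    have hhnc : (starRingEnd ℂ) (h n) = h n := by
      rw [Complex.conj_eq_iff_im]; exact hnim
    have hzz : z * (starRingEnd ℂ) z = 1 := by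
      rw [Complex.mul_conj]
      norm_cast
      rw [Complex.normSq_eq_norm_sq, hz, one_pow]
    have hrk : ∀ k : Fin n, (r k) * (starRingEnd ℂ) (r k) = 1 := by
      intro k
      rw [Complex.mul_conj]
      norm_cast
      rw [Complex.normSq_eq_norm_sq, hr, one_pow]
    rw [hfact, map_mul, map_mul, map_prod]
    have hstep : ∀ k : Fin n, z * (starRingEnd ℂ) (z - r k)
        = ((starRingEnd ℂ) (0 - r k)) * (z - r k) := by
      intro k
      rw [map_sub, map_sub, mul_sub]
      rw [hzz]
      rw [map_zero, zero_sub]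
      ring_nf
      rw [mul_comm ((starRingEnd ℂ) (r k)) (r k), hrk k]
      ring
    calc z ^ n * ((starRingEnd ℂ) 2 * (starRingEnd ℂ) (h n) * ∏ k, (starRingEnd ℂ) (z - r k))
        = (starRingEnd ℂ) 2 * (starRingEnd ℂ) (h n) * ∏ k, (z * (starRingEnd ℂ) (z - r k)) := by
          rw [Finset.prod_mul_distrib, Finset.prod_const]
          simp [Finset.card_univ]
          ring
      _ = 2 * h n * ∏ k, (((starRingEnd ℂ) (0 - r k)) * (z - r k)) := by
          rw [hhnc, Complex.conj_ofNat]
          congr 1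
          exact Finset.prod_congr rfl (fun k _ => hstep k)
      _ = 2 * h n * ∏ k, (z - r k) := by
          rw [Finset.prod_mul_distrib, ← map_prod, hprod1, map_one, one_mul]
  -- Part 3 : H vanishes at every point exp(t i) with cos (n t / 2) = 0
  set ψ : ℝ → ℝ := fun t => (Complex.exp ((-(n * t / 2) : ℝ) * I) * H (Complex.exp ((t : ℝ) * I))).re with hψ
  have hnorm1 : ∀ t : ℝ, ‖Complex.exp ((t : ℝ) * I)‖ = 1 := by
    intro t; rw [Complex.norm_exp_ofReal_mul_I]
  have him : ∀ t : ℝ, (Complex.exp ((-(n * t / 2) : ℝ) * I) * H (Complex.exp ((t : ℝ) * I))).im = 0 := by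
    intro t
    rw [← Complex.conj_eq_iff_im]
    set z := Complex.exp ((t : ℝ) * I) with hzdef
    have hzn : z ^ n = Complex.exp (((n * t : ℝ)) * I) := by
      rw [hzdef, ← Complex.exp_nat_mul]
      push_cast; ring_nf
    have hconj : (starRingEnd ℂ) (((-(n * t / 2) : ℝ)) * I) = ((n * t / 2 : ℝ)) * I := by
      rw [map_mul, Complex.conj_ofReal, Complex.conj_I]
      push_cast; ring
    have hsiz := hsi z (hnorm1 t)
    calc (starRingEnd ℂ) (Complex.exp ((-(n * t / 2) : ℝ) * I) * H z)
        = Complex.exp (((n * t / 2 : ℝ)) * I) * (starRingEnd ℂ) (H z) := by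
          rw [map_mul, ← Complex.exp_conj, hconj]
      _ = Complex.exp ((-(n * t / 2) : ℝ) * I) * (z ^ n * (starRingEnd ℂ) (H z)) := by
          rw [hzn, ← mul_assoc, ← Complex.exp_add]
          congr 2
          push_cast; ring
      _ = Complex.exp ((-(n * t / 2) : ℝ) * I) * H z := by rw [hsiz]
  have hreform : ∀ t : ℝ, (H (Complex.exp ((t : ℝ) * I))).re = Real.cos (n * t / 2) * ψ t := by
    intro t
    have h1 : H (Complex.exp ((t : ℝ) * I))
        = Complex.exp (((n * t / 2 : ℝ)) * I) *
          (Complex.exp ((-(n * t / 2) : ℝ) * I) * H (Complex.exp ((t : ℝ) * I))) := by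
      rw [← mul_assoc, ← Complex.exp_add]
      have : ((n * t / 2 : ℝ) : ℂ) * I + ((-(n * t / 2) : ℝ)) * I = 0 := by push_cast; ring
      rw [this, Complex.exp_zero, one_mul]
    rw [h1, Complex.mul_re, him, mul_zero, sub_zero, Complex.exp_ofReal_mul_I_re]
  have hnn : ∀ t : ℝ, 0 ≤ Real.cos (n * t / 2) * ψ t := by
    intro t
    rw [← hreform]
    exact hre _ (le_of_eq (hnorm1 t))
  have hψc : Continuous ψ := by
    have : ψ = fun t : ℝ => (Complex.exp ((-(n * t / 2) : ℝ) * I) *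
        ((h₀ : ℂ) + 2 * ∑ k ∈ Finset.Icc 1 n, h k * (Complex.exp ((t : ℝ) * I)) ^ k)).re := by
      funext t; rw [hψ]; simp only; rw [hH]
    rw [this]
    fun_prop
  have hHω : ∀ t : ℝ, Real.cos (n * t / 2) = 0 → H (Complex.exp ((t : ℝ) * I)) = 0 := by
    intro t₀ hc0
    have hsin : Real.sin (n * t₀ / 2) ≠ 0 := by
      intro hs
      have := Real.sin_sq_add_cos_sq (n * t₀ / 2)
      rw [hc0, hs] at this; norm_num at this
    have hg : HasDerivAt (fun t : ℝ => Real.cos (n * t / 2)) (-Real.sin (n * t₀ / 2) * (n / 2)) t₀ := by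
      have h1 : HasDerivAt (fun t : ℝ => (n * t / 2 : ℝ)) ((n : ℝ) / 2) t₀ := by
        simpa using ((hasDerivAt_id t₀).const_mul (n : ℝ)).div_const 2
      exact (Real.hasDerivAt_cos _).comp t₀ h1
    have hdne : -Real.sin (n * t₀ / 2) * ((n : ℝ) / 2) ≠ 0 := by
      apply mul_ne_zero (neg_ne_zero.mpr hsin)
      have : (0 : ℝ) < n := by exact_mod_cast hn
      positivity
    have hψ0 : ψ t₀ = 0 := by
      by_contra hc
      rcases lt_or_gt_of_ne hc with hneg | hposψ
      · have hev : ∀ᶠ t in nhds t₀, ψ t < 0 :=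
          (hψc.continuousAt (x := t₀)).eventually_lt_const hneg
        have hmax : IsLocalMax (fun t : ℝ => Real.cos (n * t / 2)) t₀ := by
          filter_upwards [hev] with t ht
          have := hnn t
          simp only [hc0]
          nlinarith
        have := hmax.deriv_eq_zero
        rw [hg.deriv] at this
        exact hdne this
      · have hev : ∀ᶠ t in nhds t₀, 0 < ψ t :=
          (hψc.continuousAt (x := t₀)).eventually_const_lt hposψ
        have hmin : IsLocalMin (fun t : ℝ => Real.cos (n * t / 2)) t₀ := by
          filter_upwards [hev] with t ht
          have := hnn t
          simp only [hc0]
          nlinarith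
        have := hmin.deriv_eq_zero
        rw [hg.deriv] at this
        exact hdne this
    have hzero : Complex.exp ((-(n * t₀ / 2) : ℝ) * I) * H (Complex.exp ((t₀ : ℝ) * I)) = 0 :=
      Complex.ext hψ0 (him t₀)
    exact (mul_eq_zero.mp hzero).resolve_left (Complex.exp_ne_zero _)
  -- Part 4 : the n distinct roots of z^n = -1 kill the low-order coefficients
  obtain ⟨m, hm⟩ : ∃ m, n = m + 1 := ⟨n - 1, by omega⟩
  set t : Fin n → ℝ := fun j => (2 * (j : ℕ) + 1) * Real.pi / n with htdef
  set ω : Fin n → ℂ := fun j => Complex.exp ((t j : ℝ) * I) with hωdef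
  have hcos : ∀ j : Fin n, Real.cos ((n : ℝ) * t j / 2) = 0 := by
    intro j
    have harg : (n : ℝ) * t j / 2 = (j : ℕ) * Real.pi + Real.pi / 2 := by
      rw [htdef]
      have : (n : ℝ) ≠ 0 := hn0R.ne'
      field_simp
    rw [harg, Real.cos_add, Real.cos_pi_div_two, Real.sin_pi_div_two,
      Real.sin_nat_mul_pi, mul_zero, zero_mul, zero_sub, neg_zero]
  have hωn : ∀ j : Fin n, (ω j) ^ n = -1 := by
    intro j
    rw [hωdef]
    simp only
    rw [← Complex.exp_nat_mul]
    have hn0 : (n : ℝ) ≠ 0 := hn0R.ne'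
    have h1 : (n : ℝ) * t j = ((2 * (j : ℕ) + 1 : ℕ) : ℝ) * Real.pi := by
      rw [htdef]
      push_cast
      field_simp
    have harg : (n : ℂ) * ((t j : ℝ) * I) = ((2 * (j : ℕ) + 1) : ℕ) * (Real.pi * I) := by
      calc (n : ℂ) * ((t j : ℝ) * I) = (((n : ℝ) * t j : ℝ) : ℂ) * I := by push_cast; ring
        _ = _ := by rw [h1]; push_cast; ring
    rw [harg, Complex.exp_nat_mul, Complex.exp_pi_mul_I]
    exact Odd.neg_one_pow ⟨(j : ℕ), by ring⟩
  have hinj : Function.Injective ω := by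
    intro j k hjk
    rw [hωdef] at hjk
    simp only at hjk
    rw [Complex.exp_eq_exp_iff_exists_int] at hjk
    obtain ⟨M, hM⟩ := hjk
    have himeq : t j = t k + M * (2 * Real.pi) := by
      have := congrArg Complex.im hM
      simpa [Complex.ofReal_mul] using this
    rw [htdef] at himeq
    simp only at himeq
    have hn0 : (n : ℝ) ≠ 0 := hn0R.ne'
    have hjk2 : ((j : ℕ) : ℝ) = (k : ℕ) + M * n := by
      field_simp at himeq
      nlinarith [himeq, hπ]
    have hjk3 : ((j : ℕ) : ℤ) = (k : ℕ) + M * n := by exact_mod_cast hjk2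
    have hj := j.2
    have hk := k.2
    have hM0 : M = 0 := by
      rcases lt_trichotomy M 0 with hM' | hM' | hM'
      · exfalso
        have : M * (n : ℤ) ≤ -n := by
          have h5 : M ≤ -1 := by omega
          have h6 : (0 : ℤ) < n := by exact_mod_cast hn
          nlinarith
        omega
      · exact hM'
      · exfalso
        have : (n : ℤ) ≤ M * n := by
          have h5 : 1 ≤ M := by omega
          have h6 : (0 : ℤ) < n := by exact_mod_cast hn
          nlinarith
        omega
    rw [hM0] at hjk3
    simp at hjk3
    exact Fin.ext (by exact_mod_cast hjk3)
  set p : Polynomial ℂ := ∑ k ∈ Finset.Icc 1 m, Polynomial.C (h k) * Polynomial.X ^ k with hpdef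
  have hpeval : ∀ z : ℂ, p.eval z = ∑ k ∈ Finset.Icc 1 m, h k * z ^ k := by
    intro z
    rw [hpdef, Polynomial.eval_finset_sum]
    simp
  have hsplit : ∀ z : ℂ, ∑ k ∈ Finset.Icc 1 n, h k * z ^ k
      = (∑ k ∈ Finset.Icc 1 m, h k * z ^ k) + h n * z ^ n := by
    intro z
    rw [hm, Finset.sum_Icc_succ_top (by omega)]
  have hpz : ∀ j : Fin n, p.eval (ω j) = 0 := by
    intro j
    have h1 := hHω (t j) (hcos j)
    rw [hH, hsplit, hωn j, hhalf] at h1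
    rw [hpeval]
    have h3 : (h₀ : ℂ) + 2 * ((∑ k ∈ Finset.Icc 1 m, h k * (ω j) ^ k) + ((h₀/2 : ℝ) : ℂ) * (-1)) =
        2 * ∑ k ∈ Finset.Icc 1 m, h k * (ω j) ^ k := by push_cast; ring
    rw [h3] at h1
    exact (mul_eq_zero.mp h1).resolve_left two_ne_zero
  have hdeg : p.natDegree < n := by
    have : p.natDegree ≤ m := by
      apply Polynomial.natDegree_sum_le_of_forall_le
      intro k hk
      rw [Finset.mem_Icc] at hk
      exact (Polynomial.natDegree_C_mul_X_pow_le _ _).trans hk.2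
    omega
  have hp0 : p = 0 := by
    apply Polynomial.eq_zero_of_natDegree_lt_card_of_eval_eq_zero p hinj hpz
    simpa using hdeg
  intro z
  have hz0 : ∑ k ∈ Finset.Icc 1 m, h k * z ^ k = 0 := by
    rw [← hpeval, hp0, Polynomial.eval_zero]
  rw [hH, hsplit, hz0, hhalf]
  push_cast
  ring
end

section
/- Fix n ≥ 1 and suppose f ∈ B maximizes Re{f}_n over all functions in B, with {f}_n > 0. Then for every holomorphic g on the unit disk with Re g > 0, one has Re(Σ_{k=0}^n {f}_{n−k}·{g}_k) ≥ 0. -/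
open Complex Metric Finset

/-- The n-th Taylor coefficient of `f` at `0`. -/
noncomputable def taylorCoeff (f : ℂ → ℂ) (n : ℕ) : ℂ :=
  iteratedDeriv n f 0 / n.factorial

open scoped NNReal Topology Interval Real

lemma taylorCoeff_eq_coeff {h : ℂ → ℂ} {p : FormalMultilinearSeries ℂ ℂ ℂ} {r : ENNReal}
    (hp : HasFPowerSeriesOnBall h p 0 r) (n : ℕ) : taylorCoeff h n = p.coeff n := by
  have h1 := hp.factorial_smul (1 : ℂ) n
  rw [taylorCoeff, iteratedDeriv_eq_iteratedFDeriv, ← h1]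
  simp only [FormalMultilinearSeries.apply_eq_pow_smul_coeff, one_pow, one_smul, nsmul_eq_mul]
  rw [mul_div_cancel_left₀]
  exact_mod_cast Nat.factorial_ne_zero n

lemma series_r {h : ℂ → ℂ} (hh : DifferentiableOn ℂ h (ball (0:ℂ) 1)) (r : ℝ≥0)
    (hr0 : 0 < r) (hr : (r:ℝ) < 1) :
    HasFPowerSeriesOnBall h (cauchyPowerSeries h 0 r) 0 r := by
  refine DifferentiableOn.hasFPowerSeriesOnBall ?_ hr0
  apply hh.mono
  intro z hz
  simp only [mem_closedBall, mem_ball, Complex.dist_eq, sub_zero] at hz ⊢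
  linarith

lemma taylorCoeff_mul {f g : ℂ → ℂ} (hf : DifferentiableOn ℂ f (ball (0:ℂ) 1))
    (hg : DifferentiableOn ℂ g (ball (0:ℂ) 1)) (m : ℕ) :
    taylorCoeff (fun z => f z * g z) m
      = ∑ k ∈ range (m + 1), taylorCoeff f k * taylorCoeff g (m - k) := by
  have h34 : ((3:ℝ≥0)/4 : ℝ) < 1 := by norm_num
  have hp := series_r hf (3/4) (by norm_num) h34
  have hq := series_r hg (3/4) (by norm_num) h34
  set p := cauchyPowerSeries f 0 ((3:ℝ≥0)/4 : ℝ≥0) with hpdef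
  set q := cauchyPowerSeries g 0 ((3:ℝ≥0)/4 : ℝ≥0) with hqdef
  set a : ℕ → ℂ := fun k => p.coeff k with hadef
  set b : ℕ → ℂ := fun k => q.coeff k with hbdef
  set c : ℕ → ℂ := fun m => ∑ k ∈ range (m + 1), a k * b (m - k) with hcdef
  have hmemrad : ∀ y : ℂ, ‖y‖ ≤ 2⁻¹ → y ∈ EMetric.ball (0:ℂ) ((3:ℝ≥0)/4 : ℝ≥0) := by
    intro y hy
    change edist y 0 < _
    rw [edist_zero_right]
    have : ‖y‖ < ((3:ℝ≥0)/4 : ℝ) := by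
      push_cast
      linarith
    exact_mod_cast this
  have hA : ∀ y : ℂ, ‖y‖ ≤ 2⁻¹ → Summable (fun k => ‖a k * y ^ k‖) := by
    intro y hy
    have := p.summable_norm_apply (x := y) (lt_of_lt_of_le (hmemrad y hy) hp.r_le)
    apply this.congr
    intro k
    rw [FormalMultilinearSeries.apply_eq_pow_smul_coeff, smul_eq_mul, mul_comm]
  have hB : ∀ y : ℂ, ‖y‖ ≤ 2⁻¹ → Summable (fun k => ‖b k * y ^ k‖) := by
    intro y hy
    have := q.summable_norm_apply (x := y) (lt_of_lt_of_le (hmemrad y hy) hq.r_le)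
    apply this.congr
    intro k
    rw [FormalMultilinearSeries.apply_eq_pow_smul_coeff, smul_eq_mul, mul_comm]
  have key : ∀ (y : ℂ) (m : ℕ),
      (∑ k ∈ range (m + 1), (a k * y ^ k) * (b (m - k) * y ^ (m - k))) = c m * y ^ m := by
    intro y m
    rw [hcdef, sum_mul]
    apply Finset.sum_congr rfl
    intro k hk
    have hkm : k ≤ m := Nat.lt_succ_iff.mp (mem_range.mp hk)
    have hyy : y ^ k * y ^ (m - k) = y ^ m := by
      rw [← pow_add, Nat.add_sub_cancel' hkm]
    calc (a k * y ^ k) * (b (m - k) * y ^ (m - k))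
        = a k * b (m - k) * (y ^ k * y ^ (m - k)) := by ring
      _ = a k * b (m - k) * y ^ m := by rw [hyy]
  have hCsum : ∀ y : ℂ, ‖y‖ ≤ 2⁻¹ → Summable (fun m => ‖c m * y ^ m‖) := by
    intro y hy
    have := summable_norm_sum_mul_range_of_summable_norm (hA y hy) (hB y hy)
    apply this.congr
    intro m
    rw [key y m]
  have hball : HasFPowerSeriesOnBall (fun z => f z * g z)
      (FormalMultilinearSeries.ofScalars ℂ c) 0 ((2:ℝ≥0)⁻¹ : ℝ≥0) := by
    constructor
    · apply FormalMultilinearSeries.le_radius_of_summable (r := (2:ℝ≥0)⁻¹)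
      have hy : ‖((2:ℂ))⁻¹‖ ≤ 2⁻¹ := by
        rw [norm_inv]
        norm_num
      have hs := hCsum _ hy
      apply hs.congr
      intro m
      rw [FormalMultilinearSeries.ofScalars_norm, norm_mul, norm_pow, norm_inv]
      push_cast
      norm_num
    · norm_num
    · intro y hy
      have hy2 : ‖y‖ ≤ 2⁻¹ := by
        change edist y 0 < _ at hy
        rw [edist_zero_right] at hy
        have : (‖y‖₊ : ℝ≥0) < (2:ℝ≥0)⁻¹ := by exact_mod_cast hy
        have := NNReal.coe_lt_coe.mpr this
        push_cast at this
        simpa using this.le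
      have hmem := hmemrad y hy2
      have hfy := hp.hasSum hmem
      have hgy := hq.hasSum hmem
      simp only [zero_add] at hfy hgy ⊢
      have e1 : (fun k => p k fun _ => y) = fun k => a k * y ^ k :=
        funext fun k => by
          rw [FormalMultilinearSeries.apply_eq_pow_smul_coeff, smul_eq_mul, mul_comm]
      have e2 : (fun k => q k fun _ => y) = fun k => b k * y ^ k :=
        funext fun k => by
          rw [FormalMultilinearSeries.apply_eq_pow_smul_coeff, smul_eq_mul, mul_comm]
      rw [e1] at hfy
      rw [e2] at hgy
      have hsum : Summable (fun m => c m * y ^ m) := (hCsum y hy2).of_norm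
      have e3 : (fun m => FormalMultilinearSeries.ofScalars ℂ c m fun _ => y)
          = fun m => c m * y ^ m :=
        funext fun m => by
          rw [FormalMultilinearSeries.ofScalars_apply_eq, smul_eq_mul]
      rw [e3, hsum.hasSum_iff]
      rw [← hfy.tsum_eq, ← hgy.tsum_eq,
        tsum_mul_tsum_eq_tsum_sum_range_of_summable_norm (hA y hy2) (hB y hy2)]
      exact tsum_congr fun m => (key y m).symm
  have hcoeff : taylorCoeff (fun z => f z * g z) m = c m := by
    rw [taylorCoeff_eq_coeff hball]
    show FormalMultilinearSeries.ofScalars ℂ c m (fun _ => 1) = c m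
    rw [FormalMultilinearSeries.ofScalars_apply_eq]
    simp
  rw [hcoeff, hcdef]
  apply Finset.sum_congr rfl
  intro k _
  rw [taylorCoeff_eq_coeff hp, taylorCoeff_eq_coeff hq]

lemma taylorCoeff_eq_circle_integral (n : ℕ) {h : ℂ → ℂ}
    (hh : DifferentiableOn ℂ h (ball (0:ℂ) 1)) :
    taylorCoeff h n = (2 * π * I : ℂ)⁻¹ • ∫ θ in (0:ℝ)..(2 * π),
      (circleMap 0 2⁻¹ θ * I *
        ((1 / circleMap 0 2⁻¹ θ) ^ n * (circleMap 0 2⁻¹ θ)⁻¹)) * h (circleMap 0 2⁻¹ θ) := by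
  have hp := series_r hh ((2:ℝ≥0)⁻¹) (by norm_num) (by norm_num)
  rw [taylorCoeff_eq_coeff hp n]
  show cauchyPowerSeries h 0 _ n (fun _ => 1) = _
  rw [cauchyPowerSeries_apply]
  have hcoe : (((2:ℝ≥0)⁻¹ : ℝ≥0) : ℝ) = (2⁻¹ : ℝ) := by norm_num
  rw [hcoe]
  congr 1
  rw [circleIntegral]
  apply intervalIntegral.integral_congr
  intro θ _
  simp only [deriv_circleMap, smul_eq_mul, sub_zero]
  ring

lemma key_deriv (n : ℕ) {f g : ℂ → ℂ} (hf : DifferentiableOn ℂ f (ball (0:ℂ) 1))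
    (hg : DifferentiableOn ℂ g (ball (0:ℂ) 1)) :
    HasDerivAt (fun t : ℝ => taylorCoeff (fun z => f z * Complex.exp (-(t:ℂ) * g z)) n)
      (-(taylorCoeff (fun z => f z * g z) n)) 0 := by
  set c : ℝ → ℂ := circleMap 0 (2⁻¹ : ℝ) with hcdef
  have hcont : Continuous c := continuous_circleMap 0 (2⁻¹ : ℝ)
  have hcne : ∀ θ, c θ ≠ 0 := fun θ => circleMap_ne_center (by norm_num)
  have habs : ∀ θ, ‖c θ‖ = 2⁻¹ := by
    intro θ
    rw [hcdef, norm_circleMap_zero]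
    norm_num
  have hmem : ∀ θ, c θ ∈ ball (0:ℂ) 1 := by
    intro θ
    simp only [mem_ball, Complex.dist_eq, sub_zero, habs θ]
    norm_num
  have hfc : Continuous fun θ => f (c θ) :=
    hf.continuousOn.comp_continuous hcont hmem
  have hgc : Continuous fun θ => g (c θ) :=
    hg.continuousOn.comp_continuous hcont hmem
  set u : ℝ → ℂ := fun θ => c θ * I * ((1 / c θ) ^ n * (c θ)⁻¹) with hudef
  have hucont : Continuous u := by
    apply ((hcont.mul continuous_const).mul
      (((continuous_const.div hcont hcne).pow n).mul (hcont.inv₀ hcne)))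
  have hunorm : ∀ θ, ‖u θ‖ = 2 ^ n := by
    intro θ
    simp only [hudef, norm_mul, norm_pow, norm_div, norm_inv,
      Complex.norm_I, norm_one, habs θ]
    rw [one_div, inv_inv]
    ring
  -- bounds
  obtain ⟨Cf, hCf⟩ := (isCompact_uIcc (a := (0:ℝ)) (b := 2*π)).exists_bound_of_continuousOn
    hfc.continuousOn
  obtain ⟨Cg, hCg⟩ := (isCompact_uIcc (a := (0:ℝ)) (b := 2*π)).exists_bound_of_continuousOn
    hgc.continuousOn
  have hCg0 : 0 ≤ Cg := le_trans (norm_nonneg _) (hCg 0 Set.left_mem_uIcc)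
  have hCf0 : 0 ≤ Cf := le_trans (norm_nonneg _) (hCf 0 Set.left_mem_uIcc)
  set Φ : ℝ → ℝ → ℂ := fun t θ => u θ * (f (c θ) * Complex.exp (-(t:ℂ) * g (c θ))) with hΦdef
  set Φ' : ℝ → ℝ → ℂ :=
    fun t θ => u θ * (f (c θ) * (Complex.exp (-(t:ℂ) * g (c θ)) * -(g (c θ)))) with hΦ'def
  have hΦcont : ∀ t, Continuous (Φ t) := by
    intro t
    exact hucont.mul (hfc.mul (Complex.continuous_exp.comp (continuous_const.mul hgc)))
  have hΦ'cont : Continuous (Φ' 0) := by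
    exact hucont.mul (hfc.mul ((Complex.continuous_exp.comp
      (continuous_const.mul hgc)).mul hgc.neg))
  have hderiv : ∀ (t : ℝ) (θ : ℝ), HasDerivAt (fun s : ℝ => Φ s θ) (Φ' t θ) t := by
    intro t θ
    have h1 : HasDerivAt (fun s : ℝ => -(s:ℂ) * g (c θ)) (-(g (c θ))) t := by
      have h0 : HasDerivAt (fun s : ℝ => (s:ℂ)) 1 t := by
        simpa using (hasDerivAt_id t).ofReal_comp
      simpa using (h0.neg.mul_const (g (c θ)))
    have h2 := h1.cexp
    exact ((h2.const_mul (f (c θ))).const_mul (u θ))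
  have hbound : ∀ (θ : ℝ), θ ∈ Set.uIcc (0:ℝ) (2*π) → ∀ t : ℝ, t ∈ ball (0:ℝ) 1 →
      ‖Φ' t θ‖ ≤ 2 ^ n * (Cf * (Cg * Real.exp Cg)) := by
    intro θ hθ t ht
    rw [hΦ'def]
    simp only [norm_mul, hunorm θ, norm_neg]
    have hexp : ‖Complex.exp (-(t:ℂ) * g (c θ))‖ ≤ Real.exp Cg := by
      rw [Complex.norm_exp]
      apply Real.exp_le_exp.mpr
      have : (-(t:ℂ) * g (c θ)).re = -(t * (g (c θ)).re) := by
        simp [Complex.mul_re]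
      rw [this]
      have h3 : |t * (g (c θ)).re| ≤ Cg := by
        rw [abs_mul]
        have ht1 : |t| ≤ 1 := by
          simp only [mem_ball, Real.dist_eq, sub_zero] at ht
          linarith [le_of_lt ht]
        have : |(g (c θ)).re| ≤ ‖g (c θ)‖ := Complex.abs_re_le_norm _
        calc |t| * |(g (c θ)).re| ≤ 1 * ‖g (c θ)‖ :=
              mul_le_mul ht1 this (abs_nonneg _) zero_le_one
          _ = ‖g (c θ)‖ := one_mul _
          _ ≤ Cg := hCg θ hθ
      linarith [abs_le.mp h3]
    have := mul_le_mul (hCf θ hθ) (mul_le_mul hexp (hCg θ hθ) (norm_nonneg _)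
      (Real.exp_nonneg _)) (mul_nonneg (norm_nonneg _) (norm_nonneg _)) hCf0
    calc (2:ℝ) ^ n * (‖f (c θ)‖ * (‖Complex.exp (-(t:ℂ) * g (c θ))‖ * ‖g (c θ)‖))
        ≤ 2 ^ n * (Cf * (Real.exp Cg * Cg)) := by
          apply mul_le_mul_of_nonneg_left this (by positivity)
      _ = 2 ^ n * (Cf * (Cg * Real.exp Cg)) := by ring
  have hmain := intervalIntegral.hasDerivAt_integral_of_dominated_loc_of_deriv_le
    (F := Φ) (F' := Φ') (x₀ := (0:ℝ)) (a := 0) (b := 2*π) (μ := MeasureTheory.volume)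
    (bound := fun _ => 2 ^ n * (Cf * (Cg * Real.exp Cg))) (s := ball (0:ℝ) 1) (ball_mem_nhds _ one_pos)
    (Filter.Eventually.of_forall fun t => (hΦcont t).aestronglyMeasurable)
    ((hΦcont 0).intervalIntegrable _ _)
    hΦ'cont.aestronglyMeasurable
    (Filter.Eventually.of_forall fun θ hθ t ht => hbound θ (Set.uIoc_subset_uIcc hθ) t ht)
    (intervalIntegrable_const)
    (Filter.Eventually.of_forall fun θ _ t _ => hderiv t θ)
  have hD := hmain.2.const_smul ((2 * π * I : ℂ)⁻¹)
  -- identify the function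
  have hfun : (fun t : ℝ => (2 * π * I : ℂ)⁻¹ • ∫ θ in (0:ℝ)..(2*π), Φ t θ)
      = fun t : ℝ => taylorCoeff (fun z => f z * Complex.exp (-(t:ℂ) * g z)) n := by
    funext t
    have hdq : DifferentiableOn ℂ (fun z => f z * Complex.exp (-(t:ℂ) * g z)) (ball (0:ℂ) 1) :=
      hf.mul ((hg.const_mul (-(t:ℂ))).cexp)
    rw [taylorCoeff_eq_circle_integral n hdq]
  -- identify the derivative
  have hval : (2 * π * I : ℂ)⁻¹ • ∫ θ in (0:ℝ)..(2*π), Φ' 0 θ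
      = -(taylorCoeff (fun z => f z * g z) n) := by
    have e : ∀ θ, Φ' 0 θ = -(u θ * (f (c θ) * g (c θ))) := by
      intro θ
      simp only [hΦ'def, Complex.ofReal_zero, neg_zero, zero_mul, Complex.exp_zero, one_mul]
      ring
    rw [intervalIntegral.integral_congr (g := fun θ => -(u θ * (f (c θ) * g (c θ))))
      (fun θ _ => e θ), intervalIntegral.integral_neg, smul_neg]
    rw [taylorCoeff_eq_circle_integral n (h := fun z => f z * g z) (hf.mul hg)]
  rw [← hfun, ← hval]
  exact hD

theorem stmt_10 (n : ℕ) (hn : 1 ≤ n) (f : ℂ → ℂ)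
    (hf : DifferentiableOn ℂ f (ball (0 : ℂ) 1))
    (hfB : ∀ z ∈ ball (0 : ℂ) 1, 0 < ‖f z‖ ∧ ‖f z‖ ≤ 1)
    (hmax : ∀ q : ℂ → ℂ, DifferentiableOn ℂ q (ball (0 : ℂ) 1) →
      (∀ z ∈ ball (0 : ℂ) 1, 0 < ‖q z‖ ∧ ‖q z‖ ≤ 1) →
      (taylorCoeff q n).re ≤ (taylorCoeff f n).re)
    (hfn : (taylorCoeff f n).im = 0 ∧ 0 < (taylorCoeff f n).re) :
    ∀ g : ℂ → ℂ, DifferentiableOn ℂ g (ball (0 : ℂ) 1) →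
      (∀ z ∈ ball (0 : ℂ) 1, 0 < (g z).re) →
      0 ≤ (∑ k ∈ Finset.range (n + 1), taylorCoeff f (n - k) * taylorCoeff g k).re := by
  intro g hg hgpos
  have hprod : taylorCoeff (fun z => f z * g z) n
      = ∑ k ∈ Finset.range (n + 1), taylorCoeff f (n - k) * taylorCoeff g k := by
    rw [taylorCoeff_mul hf hg n, ← Finset.sum_range_reflect]
    apply Finset.sum_congr rfl
    intro k hk
    have hk' : k ≤ n := Nat.lt_succ_iff.mp (mem_range.mp hk)
    have h1 : n + 1 - 1 - k = n - k := by omega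
    have h2 : n - (n - k) = k := by omega
    rw [h1, h2]
  set S : ℂ := ∑ k ∈ Finset.range (n + 1), taylorCoeff f (n - k) * taylorCoeff g k with hS
  have hkd := key_deriv n hf hg
  rw [hprod] at hkd
  set φ : ℝ → ℝ :=
    fun t => (taylorCoeff (fun z => f z * Complex.exp (-(t:ℂ) * g z)) n).re with hφ
  have hre : HasDerivAt φ (-S).re 0 := by
    have := Complex.reCLM.hasFDerivAt.comp_hasDerivAt 0 hkd
    exact this
  have hφ0 : φ 0 = (taylorCoeff f n).re := by
    have h0 : (fun z => f z * Complex.exp (-((0:ℝ):ℂ) * g z)) = f := by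
      funext z
      simp
    rw [hφ]
    simp only [h0]
  have hle : ∀ t : ℝ, 0 ≤ t → φ t ≤ φ 0 := by
    intro t ht
    rw [hφ0]
    apply hmax
    · exact hf.mul ((hg.const_mul (-(t:ℂ))).cexp)
    · intro z hz
      obtain ⟨hpos, hle1⟩ := hfB z hz
      have hgz := hgpos z hz
      have hnorm : ‖f z * Complex.exp (-(t:ℂ) * g z)‖
          = ‖f z‖ * Real.exp ((-(t:ℂ) * g z).re) := by
        rw [norm_mul, Complex.norm_exp]
      have hre' : (-(t:ℂ) * g z).re = -(t * (g z).re) := by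
        simp [Complex.mul_re]
      constructor
      · rw [hnorm]
        exact mul_pos hpos (Real.exp_pos _)
      · rw [hnorm, hre']
        have hexp1 : Real.exp (-(t * (g z).re)) ≤ 1 := by
          apply Real.exp_le_one_iff.mpr
          have : 0 ≤ t * (g z).re := mul_nonneg ht hgz.le
          linarith
        have := Real.exp_pos (-(t * (g z).re))
        nlinarith
  have htends : Filter.Tendsto (slope φ 0) (nhdsWithin 0 (Set.Ioi (0:ℝ))) (nhds ((-S).re)) := by
    apply (hasDerivAt_iff_tendsto_slope.mp hre).mono_left
    apply nhdsWithin_mono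
    intro x hx
    exact ne_of_gt hx
  have hev : ∀ᶠ t in nhdsWithin 0 (Set.Ioi (0:ℝ)), slope φ 0 t ≤ 0 := by
    filter_upwards [self_mem_nhdsWithin] with t ht
    rw [slope_def_field]
    apply div_nonpos_of_nonpos_of_nonneg
    · have := hle t (le_of_lt ht)
      linarith
    · simp only [sub_zero]
      exact le_of_lt ht
  have hfin : (-S).re ≤ 0 := le_of_tendsto htends hev
  rw [Complex.neg_re] at hfin
  linarith
end

section
/- Fix n ≥ 1 and suppose f ∈ B maximizes Re{f}_n over B, with {f}_n > 0 and {f}_0 > 0. Then the polynomial H(z) := {f}_n + 2{f}_{n−1}z + ... + 2{f}_0 zⁿ has positive real part on the open unit disk. -/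
open Complex Metric Finset

namespace Stmt11Aux

/-- Congruence for Taylor coefficients. -/
lemma tc_congr {g h : ℂ → ℂ} (hgh : ∀ z ∈ ball (0:ℂ) 1, g z = h z) (m : ℕ) :
    taylorCoeff g m = taylorCoeff h m := by
  unfold taylorCoeff
  rw [Filter.EventuallyEq.iteratedDeriv_eq m
    (Filter.eventuallyEq_of_mem (isOpen_ball.mem_nhds (by simp)) hgh)]

/-- Cauchy integral representation of Taylor coefficients on the circle of radius 1/2. -/
lemma tc_eq {g : ℂ → ℂ} (hg : DifferentiableOn ℂ g (ball (0:ℂ) 1)) (m : ℕ) :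
    taylorCoeff g m =
      (2 * ↑Real.pi * I : ℂ)⁻¹ • ∮ z in C(0, (1/2 : ℝ)), z⁻¹ ^ m • z⁻¹ • g z := by
  have hco : ((1/2 : NNReal) : ℝ) = (1/2 : ℝ) := by norm_num
  have hsub : closedBall (0:ℂ) ((1/2 : NNReal) : ℝ) ⊆ ball (0:ℂ) 1 := by
    rw [hco]; exact closedBall_subset_ball (by norm_num)
  have h := (hg.mono hsub).hasFPowerSeriesOnBall (R := (1/2 : NNReal)) (by norm_num)
  have h2 := h.factorial_smul (1 : ℂ) m
  rw [← iteratedDeriv_eq_iteratedFDeriv] at h2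
  have h3 := cauchyPowerSeries_apply g 0 ((1/2 : NNReal) : ℝ) m 1
  unfold taylorCoeff
  rw [← h2, nsmul_eq_mul, mul_comm, mul_div_assoc,
    div_self (by exact_mod_cast (Nat.factorial_pos m).ne' : ((m.factorial : ℂ)) ≠ 0), mul_one]
  rw [h3, hco]
  congr 1
  apply circleIntegral.integral_congr (by norm_num)
  intro z hz
  simp [one_div]

lemma sphere_sub_ball : sphere (0:ℂ) (1/2 : ℝ) ⊆ ball (0:ℂ) 1 := by
  intro z hz
  rw [mem_sphere_zero_iff_norm] at hz
  rw [mem_ball_zero_iff, hz]; norm_num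

lemma ne_zero_of_sphere {z : ℂ} (hz : z ∈ sphere (0:ℂ) (1/2 : ℝ)) : z ≠ 0 := by
  rw [mem_sphere_zero_iff_norm] at hz
  intro h; rw [h, norm_zero] at hz; norm_num at hz

lemma circleInt {g : ℂ → ℂ} (hg : DifferentiableOn ℂ g (ball (0:ℂ) 1)) (m : ℕ) :
    CircleIntegrable (fun z => z⁻¹ ^ m • z⁻¹ • g z) 0 (1/2 : ℝ) := by
  apply ContinuousOn.circleIntegrable (by norm_num)
  intro z hz
  have hz0 := ne_zero_of_sphere hz
  have hgz : ContinuousAt g z :=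
    hg.continuousOn.continuousAt (isOpen_ball.mem_nhds (sphere_sub_ball hz))
  exact (((continuousAt_id.inv₀ hz0).pow m).smul
    ((continuousAt_id.inv₀ hz0).smul hgz)).continuousWithinAt

lemma circleIntegral_add {g h : ℂ → ℂ} (hg : CircleIntegrable g 0 (1/2 : ℝ))
    (hh : CircleIntegrable h 0 (1/2 : ℝ)) :
    (∮ z in C(0, (1/2:ℝ)), (g z + h z)) =
      (∮ z in C(0, (1/2:ℝ)), g z) + ∮ z in C(0, (1/2:ℝ)), h z := by
  simp only [circleIntegral, smul_add]
  exact intervalIntegral.integral_add hg.out hh.out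

/-- Taylor coefficients of a linear combination. -/
lemma tc_comb {A B C : ℂ → ℂ} (hA : DifferentiableOn ℂ A (ball (0:ℂ) 1))
    (hB : DifferentiableOn ℂ B (ball (0:ℂ) 1))
    (hC : DifferentiableOn ℂ C (ball (0:ℂ) 1)) (a b c : ℂ) (m : ℕ) :
    taylorCoeff (fun z => a * A z + b * B z + c * C z) m
      = a * taylorCoeff A m + b * taylorCoeff B m + c * taylorCoeff C m := by
  have hD : DifferentiableOn ℂ (fun z => a * A z + b * B z + c * C z) (ball (0:ℂ) 1) :=
    ((hA.const_mul a).add (hB.const_mul b)).add (hC.const_mul c)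
  have hiA := circleInt (hA.const_mul a) m
  have hiB := circleInt (hB.const_mul b) m
  have hiC := circleInt (hC.const_mul c) m
  rw [tc_eq hD, tc_eq hA, tc_eq hB, tc_eq hC]
  have key : (∮ z in C(0, (1/2:ℝ)), z⁻¹ ^ m • z⁻¹ • (a * A z + b * B z + c * C z))
      = (∮ z in C(0, (1/2:ℝ)), z⁻¹ ^ m • z⁻¹ • (a * A z))
        + (∮ z in C(0, (1/2:ℝ)), z⁻¹ ^ m • z⁻¹ • (b * B z))
        + ∮ z in C(0, (1/2:ℝ)), z⁻¹ ^ m • z⁻¹ • (c * C z) := by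
    calc (∮ z in C(0, (1/2:ℝ)), z⁻¹ ^ m • z⁻¹ • (a * A z + b * B z + c * C z))
    _ = ∮ z in C(0, (1/2:ℝ)), (z⁻¹ ^ m • z⁻¹ • (a * A z)
          + (z⁻¹ ^ m • z⁻¹ • (b * B z) + z⁻¹ ^ m • z⁻¹ • (c * C z))) := by
        apply circleIntegral.integral_congr (by norm_num)
        intro z _; simp only [smul_eq_mul]; ring
    _ = (∮ z in C(0, (1/2:ℝ)), z⁻¹ ^ m • z⁻¹ • (a * A z))
          + ∮ z in C(0, (1/2:ℝ)), (z⁻¹ ^ m • z⁻¹ • (b * B z) + z⁻¹ ^ m • z⁻¹ • (c * C z)) :=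
        circleIntegral_add hiA (hiB.add hiC)
    _ = _ := by rw [circleIntegral_add hiB hiC]; ring
  rw [key]
  have ha : (∮ z in C(0, (1/2:ℝ)), z⁻¹ ^ m • z⁻¹ • (a * A z))
      = a • ∮ z in C(0, (1/2:ℝ)), z⁻¹ ^ m • z⁻¹ • A z := by
    rw [← circleIntegral.integral_smul]
    apply circleIntegral.integral_congr (by norm_num)
    intro z _; simp only [smul_eq_mul]; ring
  have hb : (∮ z in C(0, (1/2:ℝ)), z⁻¹ ^ m • z⁻¹ • (b * B z))
      = b • ∮ z in C(0, (1/2:ℝ)), z⁻¹ ^ m • z⁻¹ • B z := by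
    rw [← circleIntegral.integral_smul]
    apply circleIntegral.integral_congr (by norm_num)
    intro z _; simp only [smul_eq_mul]; ring
  have hc : (∮ z in C(0, (1/2:ℝ)), z⁻¹ ^ m • z⁻¹ • (c * C z))
      = c • ∮ z in C(0, (1/2:ℝ)), z⁻¹ ^ m • z⁻¹ • C z := by
    rw [← circleIntegral.integral_smul]
    apply circleIntegral.integral_congr (by norm_num)
    intro z _; simp only [smul_eq_mul]; ring
  rw [ha, hb, hc]
  simp only [smul_eq_mul]; ring

/-- Shift: Taylor coefficient of `z^k * g z`. -/
lemma tc_shift {g : ℂ → ℂ} (hg : DifferentiableOn ℂ g (ball (0:ℂ) 1)) {k m : ℕ}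
    (hk : k ≤ m) :
    taylorCoeff (fun z => z ^ k * g z) m = taylorCoeff g (m - k) := by
  obtain ⟨j, rfl⟩ : ∃ j, m = j + k := ⟨m - k, (Nat.sub_add_cancel hk).symm⟩
  rw [tc_eq (g := fun z => z ^ k * g z) ((differentiable_pow k).differentiableOn.mul hg), tc_eq hg, Nat.add_sub_cancel]
  congr 1
  apply circleIntegral.integral_congr (by norm_num)
  intro z hz
  have hz0 := ne_zero_of_sphere hz
  simp only [smul_eq_mul, pow_add]
  field_simp
  ring_nf
  rw [← mul_pow, mul_inv_cancel₀ hz0, one_pow, one_mul]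

/-- Vanishing: Taylor coefficient `m` of `z^(m+1) * g z` is zero. -/
lemma tc_zero {g : ℂ → ℂ} (hg : DifferentiableOn ℂ g (ball (0:ℂ) 1)) (m : ℕ) :
    taylorCoeff (fun z => z ^ (m+1) * g z) m = 0 := by
  rw [tc_eq (g := fun z => z ^ (m+1) * g z) ((differentiable_pow (m+1)).differentiableOn.mul hg)]
  have key : (∮ z in C(0, (1/2:ℝ)), z⁻¹ ^ m • z⁻¹ • (z ^ (m+1) * g z))
      = ∮ z in C(0, (1/2:ℝ)), g z := by
    apply circleIntegral.integral_congr (by norm_num)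
    intro z hz
    have hz0 := ne_zero_of_sphere hz
    simp only [smul_eq_mul, pow_succ]
    field_simp
    rw [← mul_pow, one_div, inv_mul_cancel₀ hz0, one_pow, one_mul]
  rw [key, circleIntegral_eq_zero_of_differentiable_on_off_countable (by norm_num : (0:ℝ) ≤ 1/2)
    Set.countable_empty
    (hg.continuousOn.mono (fun z hz => by
      rw [mem_closedBall_zero_iff] at hz
      rw [mem_ball_zero_iff]; linarith))
    (fun z hz => hg.differentiableAt (isOpen_ball.mem_nhds (by
      have := hz.1
      rw [mem_ball_zero_iff] at this ⊢; linarith))), smul_zero]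

/-- Taylor coefficients of finite sums. -/
lemma tc_sum {ι : Type*} {s : Finset ι} {F : ι → ℂ → ℂ}
    (h : ∀ i ∈ s, DifferentiableOn ℂ (F i) (ball (0:ℂ) 1)) (m : ℕ) :
    taylorCoeff (fun z => ∑ i ∈ s, F i z) m = ∑ i ∈ s, taylorCoeff (F i) m := by
  classical
  induction s using Finset.induction with
  | empty =>
      simp only [Finset.sum_empty]
      rw [tc_eq (differentiableOn_const 0)]
      simp [circleIntegral]
  | @insert a s ha ih =>
      have hFa := h a (Finset.mem_insert_self a s)
      have hs : ∀ i ∈ s, DifferentiableOn ℂ (F i) (ball (0:ℂ) 1) :=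
        fun i hi => h i (Finset.mem_insert_of_mem hi)
      have hsum : DifferentiableOn ℂ (fun z => ∑ i ∈ s, F i z) (ball (0:ℂ) 1) := by
        apply DifferentiableOn.fun_sum
        exact hs
      have hcomb := tc_comb hFa hsum (differentiableOn_const 0) 1 1 0 m
      have hcg : taylorCoeff (fun z => ∑ i ∈ insert a s, F i z) m
          = taylorCoeff (fun z => 1 * F a z + 1 * (∑ i ∈ s, F i z) + 0 * (0:ℂ)) m :=
        tc_congr (fun z _ => by rw [Finset.sum_insert ha]; ring) m
      rw [hcg, hcomb, ih hs, Finset.sum_insert ha]; ring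


lemma one_sub_ne {v : ℂ} (hv : ‖v‖ < 1) : (1 : ℂ) - v ≠ 0 := by
  intro h
  have : v = 1 := by linear_combination -h
  rw [this] at hv; simp at hv

lemma wz_norm {w z : ℂ} (hw : ‖w‖ < 1) (hz : ‖z‖ < 1) : ‖w * z‖ < 1 := by
  rw [norm_mul]
  nlinarith [norm_nonneg w, norm_nonneg z]

lemma re_frac_pos {v : ℂ} (hv : ‖v‖ < 1) : 0 < (((1:ℂ) + v) / (1 - v)).re := by
  have h1 : (1 : ℂ) - v ≠ 0 := one_sub_ne hv
  rw [Complex.div_re]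
  have hkey : (1 + v).re * (1 - v).re / Complex.normSq (1 - v)
      + (1 + v).im * (1 - v).im / Complex.normSq (1 - v)
      = (1 - Complex.normSq v) / Complex.normSq (1 - v) := by
    rw [← add_div]
    congr 1
    simp [Complex.normSq_apply, Complex.add_re, Complex.add_im, Complex.sub_re, Complex.sub_im]
    ring
  rw [hkey]
  apply div_pos _ (Complex.normSq_pos.mpr h1)
  have : Complex.normSq v = ‖v‖ ^ 2 := by
    rw [Complex.normSq_eq_norm_sq]
  rw [this]
  nlinarith [norm_nonneg v]

/-- telescoping sum -/
lemma telescope (v : ℂ) (n : ℕ) :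
    (∑ k ∈ Icc 1 n, v ^ k) * (1 - v) = v - v ^ (n + 1) := by
  induction n with
  | zero => simp
  | succ m ih =>
      rw [Finset.sum_Icc_succ_top (Nat.one_le_iff_ne_zero.mpr (Nat.succ_ne_zero m))]
      ring_nf
      ring_nf at ih
      linear_combination ih

/-- differentiability of 1/(1 - w z) stuff -/
lemma diff_G {f : ℂ → ℂ} (hf : DifferentiableOn ℂ f (ball (0:ℂ) 1)) {w : ℂ}
    (hw : ‖w‖ < 1) :
    DifferentiableOn ℂ (fun z => f z / (1 - w * z)) (ball (0:ℂ) 1) := by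
  apply hf.div (((differentiableOn_const 1).sub ((differentiableOn_const w).mul
    differentiableOn_id)))
  intro z hz
  exact one_sub_ne (wz_norm hw (mem_ball_zero_iff.mp hz))

lemma diff_u {w : ℂ} (hw : ‖w‖ < 1) :
    DifferentiableOn ℂ (fun z => -((1 + w * z) / (1 - w * z))) (ball (0:ℂ) 1) := by
  apply DifferentiableOn.neg
  apply DifferentiableOn.div
  · exact (differentiableOn_const 1).add ((differentiableOn_const w).mul differentiableOn_id)
  · exact (differentiableOn_const 1).sub ((differentiableOn_const w).mul differentiableOn_id)
  · intro z hz
    exact one_sub_ne (wz_norm hw (mem_ball_zero_iff.mp hz))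

/-- Main coefficient computation:  a_n(f·u_w) = -(a_n + 2 ∑ a_{n-k} w^k). -/
lemma tc_fu {f : ℂ → ℂ} (hf : DifferentiableOn ℂ f (ball (0:ℂ) 1)) {w : ℂ}
    (hw : ‖w‖ < 1) (n : ℕ) :
    taylorCoeff (fun z => f z * -((1 + w * z) / (1 - w * z))) n
      = -(taylorCoeff f n + 2 * ∑ k ∈ Icc 1 n, taylorCoeff f (n - k) * w ^ k) := by
  set G : ℂ → ℂ := fun z => f z / (1 - w * z) with hGdef
  have hG : DifferentiableOn ℂ G (ball (0:ℂ) 1) := diff_G hf hw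
  have hBk : ∀ k ∈ Icc 1 n, DifferentiableOn ℂ (fun z : ℂ => w ^ k * (z ^ k * f z))
      (ball (0:ℂ) 1) :=
    fun k _ => ((differentiable_pow k).differentiableOn.mul hf).const_mul _
  have hB : DifferentiableOn ℂ (fun z => ∑ k ∈ Icc 1 n, w ^ k * (z ^ k * f z))
      (ball (0:ℂ) 1) := DifferentiableOn.fun_sum hBk
  have hC : DifferentiableOn ℂ (fun z => z ^ (n+1) * G z) (ball (0:ℂ) 1) :=
    (differentiable_pow (n+1)).differentiableOn.mul hG
  have hid : ∀ z ∈ ball (0:ℂ) 1,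
      f z * -((1 + w * z) / (1 - w * z))
        = (-1) * f z + (-2) * (∑ k ∈ Icc 1 n, w ^ k * (z ^ k * f z))
          + (-(2 * w ^ (n+1))) * (z ^ (n+1) * G z) := by
    intro z hz
    have hv : ‖w * z‖ < 1 := wz_norm hw (mem_ball_zero_iff.mp hz)
    have hd : (1 : ℂ) - w * z ≠ 0 := one_sub_ne hv
    have hu : -((1 + w * z) / (1 - w * z)) * (1 - w * z) = -(1 + w * z) := by
      field_simp
    have hGz : G z * (1 - w * z) = f z := by
      rw [hGdef]; field_simp
    have hs : (∑ k ∈ Icc 1 n, w ^ k * (z ^ k * f z))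
        = (∑ k ∈ Icc 1 n, (w * z) ^ k) * f z := by
      rw [Finset.sum_mul]
      apply Finset.sum_congr rfl
      intro k _; rw [mul_pow]; ring
    have hT := telescope (w * z) n
    apply mul_right_cancel₀ hd
    rw [hs]
    linear_combination f z * hu + 2 * f z * hT + 2 * w ^ (n+1) * z ^ (n+1) * hGz
  have step1 : taylorCoeff (fun z => f z * -((1 + w * z) / (1 - w * z))) n
      = (-1) * taylorCoeff f n
        + (-2) * taylorCoeff (fun z => ∑ k ∈ Icc 1 n, w ^ k * (z ^ k * f z)) n
        + (-(2 * w ^ (n+1))) * taylorCoeff (fun z => z ^ (n+1) * G z) n := by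
    rw [tc_congr hid n]
    exact tc_comb hf hB hC _ _ _ n
  have step2 : taylorCoeff (fun z => ∑ k ∈ Icc 1 n, w ^ k * (z ^ k * f z)) n
      = ∑ k ∈ Icc 1 n, taylorCoeff f (n - k) * w ^ k := by
    rw [tc_sum hBk n]
    apply Finset.sum_congr rfl
    intro k hk
    have hkn : k ≤ n := (Finset.mem_Icc.mp hk).2
    have e1 : taylorCoeff (fun z : ℂ => w ^ k * (z ^ k * f z)) n
        = w ^ k * taylorCoeff (fun z : ℂ => z ^ k * f z) n
          + 0 * taylorCoeff f n + 0 * taylorCoeff f n := by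
      rw [← tc_comb (A := fun z => z ^ k * f z) ((differentiable_pow k).differentiableOn.mul hf) hf hf (w ^ k) 0 0 n]
      exact tc_congr (fun z _ => by ring) n
    rw [e1, tc_shift hf hkn]; ring
  rw [step1, step2, tc_zero hG n]; ring

lemma u_bound {w z : ℂ} (hw : ‖w‖ < 1) (hz : ‖z‖ = 1/2) :
    ‖-((1 + w * z) / (1 - w * z))‖ ≤ 3 := by
  have h1 : ‖w * z‖ ≤ 1/2 := by rw [norm_mul, hz]; nlinarith [norm_nonneg w]
  have h2 : ‖(1:ℂ) + w * z‖ ≤ 3/2 := (norm_add_le _ _).trans (by rw [norm_one]; linarith)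
  have h3 : (1/2:ℝ) ≤ ‖(1:ℂ) - w * z‖ := by
    have := norm_sub_norm_le (1:ℂ) (w * z)
    rw [norm_one] at this; linarith
  rw [norm_neg, norm_div, div_le_iff₀ (by linarith)]
  linarith

lemma re_u_nonpos {w z : ℂ} (hv : ‖w * z‖ < 1) :
    (-((1 + w * z) / (1 - w * z))).re ≤ 0 := by
  rw [Complex.neg_re]
  have := re_frac_pos hv
  linarith

/-- The variational inequality coming from maximality. -/
lemma variational (n : ℕ) {f : ℂ → ℂ}
    (hf : DifferentiableOn ℂ f (ball (0 : ℂ) 1))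
    (hfB : ∀ z ∈ ball (0 : ℂ) 1, 0 < ‖f z‖ ∧ ‖f z‖ ≤ 1)
    (hmax : ∀ q : ℂ → ℂ, DifferentiableOn ℂ q (ball (0 : ℂ) 1) →
      (∀ z ∈ ball (0 : ℂ) 1, 0 < ‖q z‖ ∧ ‖q z‖ ≤ 1) →
      (taylorCoeff q n).re ≤ (taylorCoeff f n).re)
    {w : ℂ} (hw : ‖w‖ < 1) :
    (taylorCoeff (fun z => f z * -((1 + w * z) / (1 - w * z))) n).re ≤ 0 := by
  set u : ℂ → ℂ := fun z => -((1 + w * z) / (1 - w * z)) with hu_def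
  set fu : ℂ → ℂ := fun z => f z * u z with hfu_def
  have hfu : DifferentiableOn ℂ fu (ball (0:ℂ) 1) := hf.mul (diff_u hw)
  by_contra hcon
  push_neg at hcon
  set ε : ℝ := (taylorCoeff fu n).re with hε_def
  have hεpos : 0 < ε := hcon
  set Cst : ℝ := 9 * 2 ^ n with hCst_def
  have hCpos : 0 < Cst := by positivity
  set t : ℝ := min (1/3 : ℝ) (ε / (2 * Cst)) with ht_def
  have ht0 : 0 < t := lt_min (by norm_num) (by positivity)
  have ht3 : t ≤ 1/3 := min_le_left _ _
  have htε : t ≤ ε / (2 * Cst) := min_le_right _ _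
  set q : ℂ → ℂ := fun z => f z * Complex.exp (↑t * u z) with hq_def
  have hq : DifferentiableOn ℂ q (ball (0:ℂ) 1) :=
    hf.mul (((diff_u hw).const_mul (↑t : ℂ)).cexp)
  have hqB : ∀ z ∈ ball (0 : ℂ) 1, 0 < ‖q z‖ ∧ ‖q z‖ ≤ 1 := by
    intro z hz
    have hfz := hfB z hz
    have hre : (u z).re ≤ 0 := re_u_nonpos (wz_norm hw (mem_ball_zero_iff.mp hz))
    have hexp : ‖Complex.exp (↑t * u z)‖ = Real.exp ((↑t * u z).re) := by
      rw [Complex.norm_exp]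
    have hre2 : ((↑t : ℂ) * u z).re = t * (u z).re := by
      simp [Complex.mul_re]
    constructor
    · rw [hq_def, norm_mul]
      exact mul_pos hfz.1 (by rw [hexp]; exact Real.exp_pos _)
    · rw [hq_def, norm_mul]
      have h1 : ‖Complex.exp (↑t * u z)‖ ≤ 1 := by
        rw [hexp, hre2, Real.exp_le_one_iff]
        exact mul_nonpos_of_nonneg_of_nonpos ht0.le hre
      calc ‖f z‖ * ‖Complex.exp (↑t * u z)‖ ≤ 1 * 1 :=
            mul_le_mul hfz.2 h1 (norm_nonneg _) zero_le_one
      _ = 1 := by norm_num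
  have hle : (taylorCoeff q n).re ≤ (taylorCoeff f n).re := hmax q hq hqB
  set Err : ℂ → ℂ := fun z => q z - f z - ↑t * fu z with hErr_def
  have hErr : DifferentiableOn ℂ Err (ball (0:ℂ) 1) :=
    (hq.sub hf).sub (hfu.const_mul _)
  have hcomb : taylorCoeff Err n
      = taylorCoeff q n - taylorCoeff f n - ↑t * taylorCoeff fu n := by
    have h1 : taylorCoeff Err n = taylorCoeff
        (fun z => 1 * q z + (-1) * f z + (-(↑t : ℂ)) * fu z) n :=
      tc_congr (fun z _ => by rw [hErr_def]; ring) n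
    rw [h1, tc_comb hq hf hfu 1 (-1) (-(↑t : ℂ)) n]; ring
  -- bound on the error coefficient
  have hbound : ‖taylorCoeff Err n‖ ≤ Cst * t ^ 2 := by
    rw [tc_eq hErr]
    have key : ∀ z ∈ sphere (0:ℂ) (1/2 : ℝ),
        ‖z⁻¹ ^ n • z⁻¹ • Err z‖ ≤ 2 * Cst * t ^ 2 := by
      intro z hz
      rw [mem_sphere_zero_iff_norm] at hz
      have hzball : z ∈ ball (0:ℂ) 1 := by rw [mem_ball_zero_iff, hz]; norm_num
      have hfz := hfB z hzball
      have hub : ‖u z‖ ≤ 3 := u_bound hw hz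
      set v : ℂ := ↑t * u z with hv_def
      have hvn : ‖v‖ ≤ 3 * t := by
        rw [hv_def, norm_mul, Complex.norm_real, Real.norm_eq_abs, abs_of_pos ht0]
        nlinarith
      have hv1 : ‖v‖ ≤ 1 := by linarith
      have hEz : Err z = f z * (Complex.exp v - 1 - v) := by
        rw [hErr_def, hq_def, hfu_def, hv_def]; ring
      have hexp_bound : ‖Complex.exp v - 1 - v‖ ≤ 9 * t ^ 2 := by
        have := Complex.norm_exp_sub_one_sub_id_le (x := v) hv1
        calc ‖Complex.exp v - 1 - v‖ ≤ ‖v‖ ^ 2 := this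
        _ ≤ (3 * t) ^ 2 := by nlinarith [norm_nonneg v]
        _ = 9 * t ^ 2 := by ring
      have hErrz : ‖Err z‖ ≤ 9 * t ^ 2 := by
        rw [hEz, norm_mul]
        calc ‖f z‖ * ‖Complex.exp v - 1 - v‖ ≤ 1 * (9 * t ^ 2) :=
          mul_le_mul hfz.2 hexp_bound (norm_nonneg _) zero_le_one
        _ = 9 * t ^ 2 := by norm_num
      have hzinv : ‖z⁻¹‖ = 2 := by
        rw [norm_inv, hz]; norm_num
      rw [norm_smul, norm_smul, norm_pow, hzinv]
      calc (2:ℝ) ^ n * (2 * ‖Err z‖) ≤ 2 ^ n * (2 * (9 * t ^ 2)) := by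
            apply mul_le_mul_of_nonneg_left _ (by positivity)
            nlinarith
      _ = 2 * Cst * t ^ 2 := by rw [hCst_def]; ring
    calc ‖(2 * ↑Real.pi * I : ℂ)⁻¹ • ∮ z in C(0, (1/2:ℝ)), z⁻¹ ^ n • z⁻¹ • Err z‖
        ≤ (1/2 : ℝ) * (2 * Cst * t ^ 2) :=
        circleIntegral.norm_two_pi_i_inv_smul_integral_le_of_norm_le_const
          (by norm_num) key
    _ = Cst * t ^ 2 := by ring
  -- putting it together
  have hre_t : ((↑t : ℂ) * taylorCoeff fu n).re = t * ε := by
    rw [hε_def]; simp [Complex.mul_re]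
  have hmain : t * ε ≤ Cst * t ^ 2 := by
    have h1 : t * ε = (taylorCoeff q n).re - (taylorCoeff f n).re
        - (taylorCoeff Err n).re := by
      have := congrArg Complex.re hcomb
      simp only [Complex.sub_re] at this
      rw [hre_t] at this
      linarith
    have h2 : -(taylorCoeff Err n).re ≤ ‖taylorCoeff Err n‖ := by
      have := Complex.abs_re_le_norm (taylorCoeff Err n)
      cases abs_cases (taylorCoeff Err n).re with
      | inl h => linarith [h.1, norm_nonneg (taylorCoeff Err n)]
      | inr h => linarith [h.1]
    linarith
  have hfin : ε ≤ Cst * t := by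
    have := (mul_le_mul_iff_right₀ ht0).mpr (le_refl ε)
    nlinarith
  have : Cst * t ≤ ε / 2 := by
    calc Cst * t ≤ Cst * (ε / (2 * Cst)) := by
          apply mul_le_mul_of_nonneg_left htε hCpos.le
    _ = ε / 2 := by field_simp
  linarith

end Stmt11Aux

open Stmt11Aux in
theorem stmt_11 (n : ℕ) (hn : 1 ≤ n) (f : ℂ → ℂ)
    (hf : DifferentiableOn ℂ f (ball (0 : ℂ) 1))
    (hfB : ∀ z ∈ ball (0 : ℂ) 1, 0 < ‖f z‖ ∧ ‖f z‖ ≤ 1)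
    (hmax : ∀ q : ℂ → ℂ, DifferentiableOn ℂ q (ball (0 : ℂ) 1) →
      (∀ z ∈ ball (0 : ℂ) 1, 0 < ‖q z‖ ∧ ‖q z‖ ≤ 1) →
      (taylorCoeff q n).re ≤ (taylorCoeff f n).re)
    (hfn : (taylorCoeff f n).im = 0 ∧ 0 < (taylorCoeff f n).re)
    (hf0 : (taylorCoeff f 0).im = 0 ∧ 0 < (taylorCoeff f 0).re)
    (H : ℂ → ℂ)
    (hH : ∀ z : ℂ, H z = taylorCoeff f n
        + 2 * ∑ k ∈ Finset.Icc 1 n, taylorCoeff f (n - k) * z ^ k) :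
    ∀ z ∈ ball (0 : ℂ) 1, 0 < (H z).re := by
  -- Step 1: `Re H ≥ 0` on the ball, from the variational inequality.
  have hnonneg : ∀ w ∈ ball (0:ℂ) 1, 0 ≤ (H w).re := by
    intro w hw
    rw [mem_ball_zero_iff] at hw
    have h1 := variational n hf hfB hmax hw
    rw [tc_fu hf hw n] at h1
    rw [hH w]
    simp only [Complex.neg_re] at h1
    linarith
  -- `H` is entire
  have hHdiff : Differentiable ℂ H := by
    have hHfun : H = fun z => taylorCoeff f n
        + 2 * ∑ k ∈ Finset.Icc 1 n, taylorCoeff f (n - k) * z ^ k := funext hH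
    rw [hHfun]
    apply (differentiable_const _).add
    apply (differentiable_const (2:ℂ)).mul
    apply Differentiable.fun_sum
    intro k _
    exact (differentiable_const _).mul (differentiable_pow k)
  have hA : AnalyticOnNhd ℂ H Set.univ :=
    hHdiff.differentiableOn.analyticOnNhd isOpen_univ
  -- Step 2: strict positivity via the open mapping theorem
  intro z₀ hz₀
  by_contra hc
  push_neg at hc
  have h0 : (H z₀).re = 0 := le_antisymm hc (hnonneg z₀ hz₀)
  rcases (hA z₀ (Set.mem_univ _)).eventually_constant_or_nhds_le_map_nhds with hconst | hmap
  · have heq : Set.EqOn H (fun _ => H z₀) Set.univ :=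
      hA.eqOn_of_preconnected_of_eventuallyEq analyticOnNhd_const
        isPreconnected_univ (Set.mem_univ z₀) hconst
    have hH0 : H 0 = taylorCoeff f n := by
      rw [hH 0, Finset.sum_eq_zero, mul_zero, add_zero]
      intro k hk
      have hk1 : k ≠ 0 := by have := (Finset.mem_Icc.mp hk).1; omega
      rw [zero_pow hk1, mul_zero]
    have he : H 0 = H z₀ := heq (Set.mem_univ 0)
    have : (taylorCoeff f n).re = 0 := by rw [← hH0, he, h0]
    linarith [hfn.2]
  · have hev : ∀ᶠ v in Filter.map H (nhds z₀), 0 ≤ v.re := by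
      rw [Filter.eventually_map]
      filter_upwards [isOpen_ball.mem_nhds hz₀] with z hz using hnonneg z hz
    have hev2 : ∀ᶠ v in nhds (H z₀), 0 ≤ v.re := hmap hev
    obtain ⟨δ, δpos, hδ⟩ := Metric.eventually_nhds_iff.mp hev2
    have hmem : dist (H z₀ - ((δ/2 : ℝ) : ℂ)) (H z₀) < δ := by
      rw [dist_eq_norm]
      have he : (H z₀ - ((δ/2 : ℝ):ℂ)) - H z₀ = -((δ/2 : ℝ):ℂ) := by ring
      rw [he, norm_neg, Complex.norm_real, Real.norm_eq_abs, abs_of_pos (by linarith)]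
      linarith
    have hge := hδ hmem
    have hre : (H z₀ - ((δ/2 : ℝ):ℂ)).re = -(δ/2) := by
      simp [Complex.sub_re, h0]
    rw [hre] at hge
    linarith
end

section
/- For z in the open unit disk, the function h(z) := (1 − zⁿ)/(1 + zⁿ) has positive real part, h(0) = 1, and the function f(z) := exp(−h(z)) satisfies 0 < |f(z)| ≤ 1 with Taylor expansion f(z) = e^{−1} + 2e^{−1}zⁿ + o(zⁿ). -/
open Complex Metric Finset

open Asymptotics Filter in
private lemma aux_const_eq_zero {a : ℂ} {k : ℕ}
    (h : (fun y : ℂ => a * y ^ k) =O[nhds 0] fun y => ‖y‖ ^ (k+1)) : a = 0 := by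
  rw [Asymptotics.isBigO_iff] at h
  obtain ⟨C, hC⟩ := h
  rw [Metric.eventually_nhds_iff] at hC
  obtain ⟨δ, hδ, hb⟩ := hC
  have key : ∀ ε : ℝ, 0 < ε → ‖a‖ ≤ ε := by
    intro ε hε
    set t : ℝ := min (δ/2) (ε/(|C|+1)) with ht
    have ht0 : 0 < t := lt_min (by linarith) (by positivity)
    have hyd : dist ((t:ℂ)) 0 < δ := by
      rw [dist_zero_right, Complex.norm_real, Real.norm_eq_abs, abs_of_pos ht0]
      calc t ≤ δ/2 := min_le_left _ _
        _ < δ := by linarith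
    have hbound := hb hyd
    rw [norm_mul, norm_pow, Complex.norm_real, Real.norm_eq_abs, abs_of_pos ht0,
      Real.norm_eq_abs, _root_.abs_pow, abs_of_pos ht0] at hbound
    have h2 : ‖a‖ * t ^ k ≤ |C| * t ^ (k+1) := le_trans hbound (by
      have : C * t ^ (k+1) ≤ |C| * t ^ (k+1) := by
        apply mul_le_mul_of_nonneg_right (le_abs_self C) (by positivity)
      linarith)
    rw [pow_succ, ← mul_assoc] at h2
    have h3 : ‖a‖ ≤ |C| * t :=
      (mul_le_mul_iff_left₀ (pow_pos ht0 k)).mp (by linarith [h2])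
    calc ‖a‖ ≤ |C| * t := h3
      _ ≤ |C| * (ε/(|C|+1)) := by
          apply mul_le_mul_of_nonneg_left (min_le_right _ _) (abs_nonneg C)
      _ ≤ ε := by
          rw [div_eq_mul_inv, ← mul_assoc]
          rw [mul_comm (|C|) ε, mul_assoc]
          nth_rewrite 2 [← mul_one ε]
          apply mul_le_mul_of_nonneg_left _ hε.le
          rw [mul_inv_le_iff₀ (by positivity), one_mul]
          linarith
  have : ‖a‖ ≤ 0 := le_of_forall_pos_le_add (by intro ε hε; simpa using key ε hε)
  simpa using le_antisymm this (norm_nonneg a)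

open Asymptotics Filter in
private lemma aux_pow_isBigO {a b : ℕ} (hab : b ≤ a) :
    (fun y : ℂ => (‖y‖ : ℝ) ^ a) =O[nhds 0] fun y => ‖y‖ ^ b := by
  rw [Asymptotics.isBigO_iff]
  refine ⟨1, ?_⟩
  have hev : ∀ᶠ y : ℂ in nhds 0, ‖y‖ ≤ 1 := by
    filter_upwards [Metric.ball_mem_nhds (0:ℂ) one_pos] with y hy
    rw [mem_ball_zero_iff] at hy
    exact hy.le
  filter_upwards [hev] with y hy
  rw [Real.norm_eq_abs, Real.norm_eq_abs, _root_.abs_pow, _root_.abs_pow,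
    _root_.abs_of_nonneg (norm_nonneg y), one_mul]
  exact pow_le_pow_of_le_one (norm_nonneg _) hy hab

open Asymptotics Filter in
private lemma aux_pow_self_isBigO {m b : ℕ} (hab : b ≤ m) :
    (fun y : ℂ => y ^ m) =O[nhds 0] fun y => ‖y‖ ^ b := by
  refine IsBigO.trans ?_ (aux_pow_isBigO hab)
  refine Asymptotics.isBigO_of_le _ (fun y => ?_)
  rw [norm_pow, Real.norm_eq_abs, _root_.abs_pow, _root_.abs_of_nonneg (norm_nonneg y)]

open Asymptotics Filter in
private lemma aux_coeff {f : ℂ → ℂ} {p : FormalMultilinearSeries ℂ ℂ ℂ} {n : ℕ} (hn : 1 ≤ n)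
    {c₀ cn : ℂ} (hp : HasFPowerSeriesAt f p 0)
    (hO : (fun z : ℂ => f z - c₀ - cn * z ^ n) =O[nhds 0] fun z => ‖z‖ ^ (n+1)) :
    ∀ k ≤ n, p.coeff k = if k = 0 then c₀ else if k = n then cn else 0 := by
  set c : ℕ → ℂ := fun j => if j = 0 then c₀ else if j = n then cn else 0 with hc
  intro k
  induction k using Nat.strong_induction_on with
  | _ k ih =>
    intro hk
    have hsum : ∀ y : ℂ, ∑ j ∈ Finset.range (k+1), c j * y ^ j
        = c₀ + (if k = n then cn * y ^ n else 0) := by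
      intro y
      rcases eq_or_lt_of_le hk with rfl | hkn
      · rw [if_pos rfl]
        have h0k : 0 < k := hn
        rw [← Finset.sum_erase_add _ _ (Finset.self_mem_range_succ k),
            ← Finset.sum_erase_add _ _ (Finset.mem_erase.mpr ⟨h0k.ne,
              Finset.mem_range.mpr (by omega)⟩)]
        have hz : ∀ j ∈ ((Finset.range (k+1)).erase k).erase 0, c j * y ^ j = 0 := by
          intro j hj
          simp only [Finset.mem_erase, Finset.mem_range] at hj
          simp [hc, hj.1, hj.2.1]
        rw [Finset.sum_eq_zero hz]
        simp [hc, h0k.ne']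
      · rw [if_neg hkn.ne]
        rw [← Finset.sum_erase_add _ _ (Finset.mem_range.mpr (by omega : 0 < k + 1))]
        have hz : ∀ j ∈ (Finset.range (k+1)).erase 0, c j * y ^ j = 0 := by
          intro j hj
          simp only [Finset.mem_erase, Finset.mem_range] at hj
          have hjn : j ≠ n := by omega
          simp [hc, hj.1, hjn]
        rw [Finset.sum_eq_zero hz]
        simp [hc]
    have hO2 : (fun y : ℂ => f y - ∑ j ∈ Finset.range (k+1), c j * y ^ j)
        =O[nhds 0] fun y => ‖y‖ ^ (k+1) := by
      rcases eq_or_lt_of_le hk with rfl | hkn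
      · have heq : (fun y : ℂ => f y - ∑ j ∈ Finset.range (k+1), c j * y ^ j)
            = fun y : ℂ => f y - c₀ - cn * y ^ k := by
          funext y; rw [hsum y, if_pos rfl]; ring
        rw [heq]; exact hO
      · have heq : (fun y : ℂ => f y - ∑ j ∈ Finset.range (k+1), c j * y ^ j)
            = fun y : ℂ => (f y - c₀ - cn * y ^ n) + cn * y ^ n := by
          funext y; rw [hsum y, if_neg hkn.ne]; ring
        rw [heq]
        exact (hO.trans (aux_pow_isBigO (by omega))).add
          ((aux_pow_self_isBigO (by omega : k + 1 ≤ n)).const_mul_left cn)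
    have hO1 : (fun y : ℂ => f y - p.partialSum (k+1) y) =O[nhds 0] fun y => ‖y‖ ^ (k+1) := by
      simpa using hp.isBigO_sub_partialSum_pow (k+1)
    have hdiff : (fun y : ℂ => (p.coeff k - c k) * y ^ k) =O[nhds 0] fun y => ‖y‖ ^ (k+1) := by
      have heq : (fun y : ℂ => (p.coeff k - c k) * y ^ k)
          = fun y => (f y - ∑ j ∈ Finset.range (k+1), c j * y ^ j)
            - (f y - p.partialSum (k+1) y) := by
        funext y
        have hps : p.partialSum (k+1) y = ∑ j ∈ Finset.range (k+1), p.coeff j * y ^ j := by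
          unfold FormalMultilinearSeries.partialSum
          refine Finset.sum_congr rfl fun j _ => ?_
          rw [FormalMultilinearSeries.apply_eq_pow_smul_coeff, smul_eq_mul]; ring
        rw [hps, show f y - ∑ j ∈ Finset.range (k+1), c j * y ^ j
              - (f y - ∑ j ∈ Finset.range (k+1), p.coeff j * y ^ j)
            = ∑ j ∈ Finset.range (k+1), (p.coeff j - c j) * y ^ j from by
          simp only [sub_mul]; rw [Finset.sum_sub_distrib]; ring]
        rw [Finset.sum_eq_single_of_mem k (Finset.self_mem_range_succ k)]
        intro j hj hjk
        have hjk' : j < k := by simp only [Finset.mem_range] at hj; omega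
        rw [ih j hjk' (by omega)]
        simp [hc]
      rw [heq]
      exact hO2.sub hO1
    simpa [hc] using sub_eq_zero.mp (aux_const_eq_zero hdiff)

private lemma taylorCoeff_eq_coeff_s13 {f : ℂ → ℂ} {p : FormalMultilinearSeries ℂ ℂ ℂ}
    (hp : HasFPowerSeriesAt f p 0) (k : ℕ) : taylorCoeff f k = p.coeff k := by
  obtain ⟨r, hr⟩ := hp
  have h1 := hr.factorial_smul (1 : ℂ) k
  rw [FormalMultilinearSeries.apply_eq_pow_smul_coeff, one_pow, one_smul] at h1
  rw [taylorCoeff, iteratedDeriv_eq_iteratedFDeriv, ← h1, nsmul_eq_mul]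
  rw [mul_div_assoc, mul_div_cancel₀]
  exact_mod_cast Nat.factorial_ne_zero k

theorem stmt_13 (n : ℕ) (hn : 1 ≤ n) (h f : ℂ → ℂ)
    (hh : ∀ z : ℂ, h z = (1 - z ^ n) / (1 + z ^ n))
    (hf : ∀ z : ℂ, f z = Complex.exp (-h z)) :
    (∀ z ∈ ball (0 : ℂ) 1, 0 < (h z).re) ∧
    h 0 = 1 ∧
    (∀ z ∈ ball (0 : ℂ) 1, 0 < ‖f z‖ ∧ ‖f z‖ ≤ 1) ∧
    taylorCoeff f 0 = Complex.exp (-1) ∧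
    (∀ k, 1 ≤ k → k ≤ n - 1 → taylorCoeff f k = 0) ∧
    taylorCoeff f n = 2 * Complex.exp (-1) := by
  have hne : ∀ w : ℂ, ‖w‖ < 1 → 1 + w ≠ 0 := by
    intro w hw h0
    rw [eq_neg_of_add_eq_zero_right h0] at hw
    simp at hw
  have hre : ∀ z ∈ ball (0 : ℂ) 1, 0 < (h z).re := by
    intro z hz
    rw [mem_ball_zero_iff] at hz
    have hw : ‖z ^ n‖ < 1 := by
      rw [norm_pow]; exact pow_lt_one₀ (norm_nonneg z) hz (by omega)
    set w := z ^ n with hwdef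
    rw [hh z, ← hwdef, Complex.div_re, ← add_div]
    apply div_pos
    · have hnum : (1 - w).re * (1 + w).re + (1 - w).im * (1 + w).im
          = 1 - Complex.normSq w := by
        simp [Complex.normSq_apply, Complex.sub_re, Complex.add_re, Complex.one_re,
          Complex.sub_im, Complex.add_im, Complex.one_im]
        ring
      rw [hnum]
      have hsq : Complex.normSq w < 1 := by
        rw [Complex.normSq_eq_norm_sq]
        calc ‖w‖ ^ 2 < 1 ^ 2 := by
              apply pow_lt_pow_left₀ hw (norm_nonneg w) (by norm_num)
          _ = 1 := one_pow 2
      linarith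
    · exact Complex.normSq_pos.mpr (hne w hw)
  refine ⟨hre, ?_, ?_, ?_⟩
  · rw [hh 0, zero_pow (by omega : n ≠ 0)]
    norm_num
  · intro z hz
    rw [hf z, Complex.norm_exp]
    refine ⟨Real.exp_pos _, ?_⟩
    rw [Real.exp_le_one_iff, Complex.neg_re]
    linarith [hre z hz]
  -- Taylor coefficients
  · have hfeq : f = fun z => Complex.exp (-((1 - z ^ n) / (1 + z ^ n))) := by
      funext z; rw [hf z, hh z]
    have hA : AnalyticAt ℂ f 0 := by
      rw [hfeq]
      apply AnalyticAt.cexp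
      apply AnalyticAt.neg
      apply AnalyticAt.div
      · exact analyticAt_const.sub ((analyticAt_id).pow n)
      · exact analyticAt_const.add ((analyticAt_id).pow n)
      · simp [zero_pow (by omega : n ≠ 0)]
    obtain ⟨p, hp⟩ := hA
    have hO : (fun z : ℂ => f z - Complex.exp (-1) - (2 * Complex.exp (-1)) * z ^ n)
        =O[nhds 0] fun z => ‖z‖ ^ (n+1) := by
      rw [Asymptotics.isBigO_iff]
      refine ⟨10, ?_⟩
      rw [Metric.eventually_nhds_iff]
      refine ⟨1/4, by norm_num, ?_⟩
      intro z hzd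
      rw [dist_zero_right] at hzd
      have hz4 : ‖z‖ ≤ 1/4 := hzd.le
      set w := z ^ n with hwdef
      have hwn : ‖w‖ = ‖z‖ ^ n := by rw [hwdef, norm_pow]
      have hw4 : ‖w‖ ≤ 1/4 := by
        rw [hwn]
        calc ‖z‖ ^ n ≤ ‖z‖ ^ 1 :=
              pow_le_pow_of_le_one (norm_nonneg z) (by linarith) hn
          _ = ‖z‖ := pow_one _
          _ ≤ 1/4 := hz4
      have hd : (3:ℝ)/4 ≤ ‖1 + w‖ := by
        have h1 : ‖(1:ℂ)‖ ≤ ‖1 + w‖ + ‖w‖ := by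
          calc ‖(1:ℂ)‖ = ‖(1 + w) - w‖ := by ring_nf
            _ ≤ ‖1 + w‖ + ‖w‖ := norm_sub_le _ _
        rw [norm_one] at h1
        linarith
      have hne0 : (1 : ℂ) + w ≠ 0 := by
        intro h0; rw [h0, norm_zero] at hd; linarith
      set u := 2 * w / (1 + w) with hu
      have h2norm : ‖(2:ℂ)‖ = 2 := by norm_num
      have hun : ‖u‖ ≤ 8/3 * ‖w‖ := by
        rw [hu, norm_div, norm_mul, h2norm, div_le_iff₀ (by linarith : (0:ℝ) < ‖1+w‖)]
        nlinarith [norm_nonneg w]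
      have hu1 : ‖u‖ ≤ 1 := by
        calc ‖u‖ ≤ 8/3 * ‖w‖ := hun
          _ ≤ 8/3 * (1/4) := by linarith
          _ ≤ 1 := by norm_num
      have hexp : ‖Complex.exp u - 1 - u‖ ≤ ‖u‖ ^ 2 := by
        have := Complex.norm_exp_sub_one_sub_id_le (x := u) hu1
        exact this
      have hfz : f z = Complex.exp (-1) * Complex.exp u := by
        rw [hf z, ← Complex.exp_add]
        congr 1
        rw [hh z, ← hwdef, hu]
        field_simp
        ring
      have hid : f z - Complex.exp (-1) - 2 * Complex.exp (-1) * z ^ n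
          = Complex.exp (-1) * ((Complex.exp u - 1 - u) + (u - 2 * w)) := by
        rw [hfz, ← hwdef]; ring
      have hu2w : ‖u - 2 * w‖ ≤ 8/3 * ‖w‖ ^ 2 := by
        have heq2 : u - 2 * w = -(2 * w ^ 2) / (1 + w) := by
          rw [hu]; field_simp; ring
        rw [heq2, norm_div, norm_neg, norm_mul, h2norm, norm_pow,
          div_le_iff₀ (by linarith : (0:ℝ) < ‖1+w‖)]
        nlinarith [norm_nonneg w, sq_nonneg ‖w‖]
      have hexp1 : ‖Complex.exp (-1 : ℂ)‖ ≤ 1 := by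
        rw [Complex.norm_exp]
        rw [Real.exp_le_one_iff]
        simp
      have hw2 : ‖w‖ ^ 2 ≤ ‖z‖ ^ (n + 1) := by
        rw [hwn, ← pow_mul]
        apply pow_le_pow_of_le_one (norm_nonneg z) (by linarith)
        omega
      rw [hid]
      calc ‖Complex.exp (-1 : ℂ) * ((Complex.exp u - 1 - u) + (u - 2 * w))‖
          = ‖Complex.exp (-1 : ℂ)‖ * ‖(Complex.exp u - 1 - u) + (u - 2 * w)‖ :=
            norm_mul _ _
        _ ≤ 1 * (‖Complex.exp u - 1 - u‖ + ‖u - 2 * w‖) := by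
            apply mul_le_mul hexp1 (norm_add_le _ _) (norm_nonneg _) zero_le_one
        _ ≤ 1 * (‖u‖ ^ 2 + 8/3 * ‖w‖ ^ 2) := by
            apply mul_le_mul_of_nonneg_left _ zero_le_one
            linarith
        _ ≤ 10 * ‖w‖ ^ 2 := by
            nlinarith [norm_nonneg u, norm_nonneg w, hun]
        _ ≤ 10 * ‖z‖ ^ (n + 1) := by linarith
        _ ≤ 10 * ‖‖z‖ ^ (n + 1)‖ := by
            rw [Real.norm_eq_abs, _root_.abs_pow, _root_.abs_of_nonneg (norm_nonneg z)]
    have hcs := aux_coeff hn hp hO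
    refine ⟨?_, ?_, ?_⟩
    · rw [taylorCoeff_eq_coeff_s13 hp 0, hcs 0 (by omega)]
      simp
    · intro k hk1 hk2
      rw [taylorCoeff_eq_coeff_s13 hp k, hcs k (by omega)]
      rw [if_neg (by omega), if_neg (by omega)]
    · rw [taylorCoeff_eq_coeff_s13 hp n, hcs n le_rfl]
      rw [if_neg (by omega), if_pos rfl]
end
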